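/- arXiv:2104.01412 — 8 statements merged into one kernel-verified Lean document; each statement's English description precedes it below -/
import Mathlib

section
/- Let α₁, α₂ > 0 with α₁ ≠ α₂. Then x = 1/2 is the unique solution in (0,1) of the equation F_{α₁}(x) = F_{α₂}(x), where F_α is the distribution function of the symmetric Beta distribution with parameter α. -/
open MeasureTheory intervalIntegral

noncomputable def betaB (α : ℝ) : ℝ := ∫ x in (0:ℝ)..1, x ^ (α - 1) * (1 - x) ^ (α - 1)

noncomputable def fbeta (α x : ℝ) : ℝ := x ^ (α - 1) * (1 - x) ^ (α - 1) / betaB α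

noncomputable def Fbeta (α t : ℝ) : ℝ := ∫ x in (0:ℝ)..t, fbeta α x

lemma fbeta_symm (α x : ℝ) : fbeta α (1 - x) = fbeta α x := by
  unfold fbeta
  rw [sub_sub_cancel, mul_comm]

lemma intInt_left (α : ℝ) (hα : 0 < α) :
    IntervalIntegrable (fun t : ℝ => t ^ (α - 1) * (1 - t) ^ (α - 1)) volume 0 (1/2) := by
  apply (intervalIntegral.intervalIntegrable_rpow' (by linarith)).mul_continuousOn
  apply ContinuousOn.rpow_const
  · fun_prop
  · intro t ht
    rw [Set.uIcc_of_le (by norm_num : (0:ℝ) ≤ 1/2)] at ht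
    left
    intro h
    have := ht.2
    norm_num at this ⊢
    linarith [sub_eq_zero.mp h]

lemma intInt_right (α : ℝ) (hα : 0 < α) :
    IntervalIntegrable (fun t : ℝ => t ^ (α - 1) * (1 - t) ^ (α - 1)) volume (1/2) 1 := by
  have h := (intInt_left α hα).comp_sub_left 1
  norm_num at h
  have he : (fun x : ℝ => (1 - x) ^ (α - 1) * x ^ (α - 1))
      = fun t : ℝ => t ^ (α - 1) * (1 - t) ^ (α - 1) := by
    funext x; rw [mul_comm]
  rw [he] at h
  exact h.symm

lemma intInt (α : ℝ) (hα : 0 < α) {a b : ℝ} (ha0 : 0 ≤ a) (ha1 : a ≤ 1)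
    (hb0 : 0 ≤ b) (hb1 : b ≤ 1) :
    IntervalIntegrable (fun t : ℝ => t ^ (α - 1) * (1 - t) ^ (α - 1)) volume a b := by
  apply ((intInt_left α hα).trans (intInt_right α hα)).mono_set
  rw [Set.uIcc_of_le (le_refl (0:ℝ) |>.trans zero_le_one)]
  exact Set.uIcc_subset_Icc ⟨ha0, ha1⟩ ⟨hb0, hb1⟩

lemma fbeta_intble (α : ℝ) (hα : 0 < α) {a b : ℝ} (ha0 : 0 ≤ a) (ha1 : a ≤ 1)
    (hb0 : 0 ≤ b) (hb1 : b ≤ 1) :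
    IntervalIntegrable (fbeta α) volume a b := by
  exact (intInt α hα ha0 ha1 hb0 hb1).div_const (betaB α)

lemma betaB_pos (α : ℝ) (hα : 0 < α) : 0 < betaB α := by
  unfold betaB
  apply intervalIntegral_pos_of_pos_on
    (intInt α hα le_rfl zero_le_one zero_le_one le_rfl)
  · intro t ht
    exact mul_pos (Real.rpow_pos_of_pos ht.1 _)
      (Real.rpow_pos_of_pos (by linarith [ht.2]) _)
  · norm_num

lemma Fbeta_one (α : ℝ) (hα : 0 < α) : Fbeta α 1 = 1 := by
  show (∫ x in (0:ℝ)..1, x ^ (α - 1) * (1 - x) ^ (α - 1) / betaB α) = 1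
  rw [intervalIntegral.integral_div]
  exact div_self (betaB_pos α hα).ne'

lemma Fbeta_reflect (α : ℝ) (hα : 0 < α) {t : ℝ} (ht0 : 0 ≤ t) (ht1 : t ≤ 1) :
    Fbeta α t + Fbeta α (1 - t) = 1 := by
  have h0 : (∫ x in t..1, fbeta α (1 - x)) = ∫ x in (0:ℝ)..(1 - t), fbeta α x := by
    have := intervalIntegral.integral_comp_sub_left (a := t) (b := 1) (fbeta α) 1
    simpa using this
  have h1 : (∫ x in t..1, fbeta α (1 - x)) = ∫ x in t..1, fbeta α x := by
    apply intervalIntegral.integral_congr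
    intro x _
    exact fbeta_symm α x
  have h2 : Fbeta α t + ∫ x in t..1, fbeta α x = Fbeta α 1 :=
    integral_add_adjacent_intervals (fbeta_intble α hα le_rfl zero_le_one ht0 ht1)
      (fbeta_intble α hα ht0 ht1 zero_le_one le_rfl)
  have h3 : Fbeta α (1 - t) = ∫ x in t..1, fbeta α x := by
    show (∫ x in (0:ℝ)..(1 - t), fbeta α x) = _
    rw [← h0, h1]
  rw [h3]
  rw [h2, Fbeta_one α hα]

lemma Fbeta_half (α : ℝ) (hα : 0 < α) : Fbeta α (1/2) = 1/2 := by
  have := Fbeta_reflect α hα (t := 1/2) (by norm_num) (by norm_num)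
  norm_num at this
  linarith

lemma fbeta_eq_u (α : ℝ) {t : ℝ} (ht0 : 0 < t) (ht1 : t < 1) :
    fbeta α t = (t * (1 - t)) ^ (α - 1) / betaB α := by
  unfold fbeta
  rw [Real.mul_rpow ht0.le (by linarith)]

lemma sign_lt (a b : ℝ) (hb : 0 < b) (hab : b < a) {t : ℝ} (ht0 : 0 < t) (ht1 : t < 1)
    (hu : t * (1 - t) < (betaB a / betaB b) ^ (a - b)⁻¹) :
    fbeta a t < fbeta b t := by
  have ha : 0 < a := hb.trans hab
  have hBa := betaB_pos a ha
  have hBb := betaB_pos b hb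
  have hδ : 0 < a - b := by linarith
  set r := (betaB a / betaB b) ^ (a - b)⁻¹ with hr
  have hrpos : 0 < r := Real.rpow_pos_of_pos (div_pos hBa hBb) _
  have hupos : 0 < t * (1 - t) := mul_pos ht0 (by linarith)
  have h1 : (t * (1 - t)) ^ (a - b) < r ^ (a - b) :=
    Real.rpow_lt_rpow hupos.le hu hδ
  have h2 : r ^ (a - b) = betaB a / betaB b :=
    Real.rpow_inv_rpow (le_of_lt (div_pos hBa hBb)) hδ.ne'
  rw [h2] at h1
  have h3 : (t * (1 - t)) ^ (a - b) * betaB b < betaB a := (lt_div_iff₀ hBb).mp h1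
  rw [fbeta_eq_u a ht0 ht1, fbeta_eq_u b ht0 ht1, div_lt_div_iff₀ hBa hBb]
  have hsplit : (t * (1 - t)) ^ (a - 1) = (t * (1 - t)) ^ (b - 1) * (t * (1 - t)) ^ (a - b) := by
    rw [← Real.rpow_add hupos]; congr 1; ring
  rw [hsplit, mul_assoc]
  have hpow : 0 < (t * (1 - t)) ^ (b - 1) := Real.rpow_pos_of_pos hupos _
  exact (mul_lt_mul_iff_right₀ hpow).mpr h3

lemma sign_gt (a b : ℝ) (hb : 0 < b) (hab : b < a) {t : ℝ} (ht0 : 0 < t) (ht1 : t < 1)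
    (hu : (betaB a / betaB b) ^ (a - b)⁻¹ < t * (1 - t)) :
    fbeta b t < fbeta a t := by
  have ha : 0 < a := hb.trans hab
  have hBa := betaB_pos a ha
  have hBb := betaB_pos b hb
  have hδ : 0 < a - b := by linarith
  set r := (betaB a / betaB b) ^ (a - b)⁻¹ with hr
  have hrpos : 0 < r := Real.rpow_pos_of_pos (div_pos hBa hBb) _
  have hupos : 0 < t * (1 - t) := mul_pos ht0 (by linarith)
  have h1 : r ^ (a - b) < (t * (1 - t)) ^ (a - b) :=
    Real.rpow_lt_rpow hrpos.le hu hδ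
  have h2 : r ^ (a - b) = betaB a / betaB b :=
    Real.rpow_inv_rpow (le_of_lt (div_pos hBa hBb)) hδ.ne'
  rw [h2] at h1
  have h3 : betaB a < (t * (1 - t)) ^ (a - b) * betaB b := (div_lt_iff₀ hBb).mp h1
  rw [fbeta_eq_u a ht0 ht1, fbeta_eq_u b ht0 ht1, div_lt_div_iff₀ hBb hBa]
  have hsplit : (t * (1 - t)) ^ (a - 1) = (t * (1 - t)) ^ (b - 1) * (t * (1 - t)) ^ (a - b) := by
    rw [← Real.rpow_add hupos]; congr 1; ring
  rw [hsplit, mul_assoc]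
  have hpow : 0 < (t * (1 - t)) ^ (b - 1) := Real.rpow_pos_of_pos hupos _
  exact (mul_lt_mul_iff_right₀ hpow).mpr h3

lemma key (a b : ℝ) (hb : 0 < b) (hab : b < a) {x : ℝ} (hx0 : 0 < x) (hx2 : x < 1/2) :
    Fbeta a x < Fbeta b x := by
  have ha : 0 < a := hb.trans hab
  set r := (betaB a / betaB b) ^ (a - b)⁻¹ with hrdef
  have hrpos : 0 < r := Real.rpow_pos_of_pos (div_pos (betaB_pos a ha) (betaB_pos b hb)) _
  -- r < 1/4, else fbeta a < fbeta b on all of (0,1) minus 1/2, contradicting equality at 1/2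
  have hr4 : r < 1/4 := by
    by_contra hge
    push_neg at hge
    have hneg : ∀ t ∈ Set.Ioo (0:ℝ) (1/2), 0 < fbeta b t - fbeta a t := by
      intro t ht
      have h1 : t * (1 - t) < 1/4 := by nlinarith [ht.1, ht.2]
      have := sign_lt a b hb hab ht.1 (by linarith [ht.2]) (by linarith)
      linarith
    have hint : 0 < ∫ t in (0:ℝ)..(1/2), (fbeta b t - fbeta a t) := by
      apply intervalIntegral_pos_of_pos_on _ hneg (by norm_num)
      exact (fbeta_intble b hb le_rfl zero_le_one (by norm_num) (by norm_num)).sub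
        (fbeta_intble a ha le_rfl zero_le_one (by norm_num) (by norm_num))
    rw [intervalIntegral.integral_sub
      (fbeta_intble b hb le_rfl zero_le_one (by norm_num) (by norm_num))
      (fbeta_intble a ha le_rfl zero_le_one (by norm_num) (by norm_num))] at hint
    have := Fbeta_half a ha
    have := Fbeta_half b hb
    show False
    have e1 : (∫ t in (0:ℝ)..(1/2), fbeta b t) = Fbeta b (1/2) := rfl
    have e2 : (∫ t in (0:ℝ)..(1/2), fbeta a t) = Fbeta a (1/2) := rfl
    rw [e1, e2] at hint
    linarith
  -- crossing point c
  set s := Real.sqrt (1 - 4*r) with hs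
  have hs2 : s ^ 2 = 1 - 4*r := Real.sq_sqrt (by linarith)
  have hs0 : 0 < s := Real.sqrt_pos.mpr (by linarith)
  have hs1 : s < 1 := by nlinarith
  set c := (1 - s)/2 with hc
  have hc0 : 0 < c := by rw [hc]; linarith
  have hc2 : c < 1/2 := by rw [hc]; linarith
  have hcr : c * (1 - c) = r := by rw [hc]; nlinarith
  rcases le_or_gt x c with hxc | hxc
  · -- g < 0 on (0,x)
    have hneg : ∀ t ∈ Set.Ioo (0:ℝ) x, 0 < fbeta b t - fbeta a t := by
      intro t ht
      have htc : t < c := lt_of_lt_of_le ht.2 hxc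
      have hu : t * (1 - t) < r := by
        rw [← hcr]; nlinarith [ht.1]
      have := sign_lt a b hb hab ht.1 (by linarith [ht.2]) hu
      linarith
    have hint : 0 < ∫ t in (0:ℝ)..x, (fbeta b t - fbeta a t) := by
      apply intervalIntegral_pos_of_pos_on _ hneg hx0
      exact (fbeta_intble b hb le_rfl zero_le_one hx0.le (by linarith)).sub
        (fbeta_intble a ha le_rfl zero_le_one hx0.le (by linarith))
    rw [intervalIntegral.integral_sub
      (fbeta_intble b hb le_rfl zero_le_one hx0.le (by linarith))
      (fbeta_intble a ha le_rfl zero_le_one hx0.le (by linarith))] at hint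
    have e1 : (∫ t in (0:ℝ)..x, fbeta b t) = Fbeta b x := rfl
    have e2 : (∫ t in (0:ℝ)..x, fbeta a t) = Fbeta a x := rfl
    rw [e1, e2] at hint
    linarith
  · -- g > 0 on (x, 1/2)
    have hpos : ∀ t ∈ Set.Ioo x (1/2:ℝ), 0 < fbeta a t - fbeta b t := by
      intro t ht
      have htc : c < t := hxc.trans ht.1
      have hu : r < t * (1 - t) := by
        rw [← hcr]; nlinarith [ht.2]
      have := sign_gt a b hb hab (hx0.trans ht.1) (by linarith [ht.2]) hu
      linarith
    have hint : 0 < ∫ t in x..(1/2:ℝ), (fbeta a t - fbeta b t) := by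
      apply intervalIntegral_pos_of_pos_on _ hpos hx2
      exact (fbeta_intble a ha hx0.le (by linarith) (by norm_num) (by norm_num)).sub
        (fbeta_intble b hb hx0.le (by linarith) (by norm_num) (by norm_num))
    rw [intervalIntegral.integral_sub
      (fbeta_intble a ha hx0.le (by linarith) (by norm_num) (by norm_num))
      (fbeta_intble b hb hx0.le (by linarith) (by norm_num) (by norm_num))] at hint
    have hadd_a : Fbeta a x + ∫ t in x..(1/2:ℝ), fbeta a t = Fbeta a (1/2) :=
      integral_add_adjacent_intervals
        (fbeta_intble a ha le_rfl zero_le_one hx0.le (by linarith))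
        (fbeta_intble a ha hx0.le (by linarith) (by norm_num) (by norm_num))
    have hadd_b : Fbeta b x + ∫ t in x..(1/2:ℝ), fbeta b t = Fbeta b (1/2) :=
      integral_add_adjacent_intervals
        (fbeta_intble b hb le_rfl zero_le_one hx0.le (by linarith))
        (fbeta_intble b hb hx0.le (by linarith) (by norm_num) (by norm_num))
    have h1 := Fbeta_half a ha
    have h2 := Fbeta_half b hb
    linarith

lemma key2 (a b : ℝ) (hb : 0 < b) (hab : b < a) {x : ℝ} (hx0 : 0 < x) (hx1 : x < 1)
    (hxh : x ≠ 1/2) : Fbeta a x ≠ Fbeta b x := by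
  have ha : 0 < a := hb.trans hab
  rcases lt_or_gt_of_ne hxh with h | h
  · exact ne_of_lt (key a b hb hab hx0 h)
  · have ra := Fbeta_reflect a ha (t := x) hx0.le hx1.le
    have rb := Fbeta_reflect b hb (t := x) hx0.le hx1.le
    have hk := key a b hb hab (x := 1 - x) (by linarith) (by linarith)
    intro heq
    rw [heq] at ra
    have : Fbeta a (1 - x) = Fbeta b (1 - x) := by linarith
    exact absurd this (ne_of_lt hk)

theorem Fbeta_unique_crossing (α₁ α₂ : ℝ) (h₁ : 0 < α₁) (h₂ : 0 < α₂) (hne : α₁ ≠ α₂) :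
    ∀ x ∈ Set.Ioo (0:ℝ) 1, (Fbeta α₁ x = Fbeta α₂ x ↔ x = 1/2) := by
  intro x hx
  obtain ⟨hx0, hx1⟩ := hx
  constructor
  · intro heq
    by_contra hxh
    rcases lt_or_gt_of_ne hne with h | h
    · exact key2 α₂ α₁ h₁ h hx0 hx1 hxh heq.symm
    · exact key2 α₁ α₂ h₂ h hx0 hx1 hxh heq
  · intro h
    rw [h, Fbeta_half α₁ h₁, Fbeta_half α₂ h₂]
end

section
/- For each fixed x ∈ (0, 1/2), the function α ↦ F_α(x) is strictly decreasing on (0, ∞), where F_α is the distribution function of the symmetric Beta distribution with parameter α. -/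
open MeasureTheory intervalIntegral Set

namespace BetaAux

noncomputable def w (γ t : ℝ) : ℝ := t ^ (γ - 1) * (1 - t) ^ (γ - 1)

lemma w_pos {γ t : ℝ} (h0 : 0 < t) (h1 : t < 1) : 0 < w γ t :=
  mul_pos (Real.rpow_pos_of_pos h0 _) (Real.rpow_pos_of_pos (by linarith) _)

lemma intInt_w {γ : ℝ} (hγ : 0 < γ) {a b : ℝ}
    (ha : a ∈ Icc (0:ℝ) 1) (hb : b ∈ Icc (0:ℝ) 1) :
    IntervalIntegrable (w γ) volume a b := by
  have h1 : IntervalIntegrable (w γ) volume 0 (1/2) := by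
    apply (intervalIntegral.intervalIntegrable_rpow' (a := (0:ℝ)) (b := 1/2)
      (r := γ - 1) (by linarith)).mul_continuousOn
    apply ContinuousOn.rpow_const (by fun_prop)
    intro t ht
    rw [Set.uIcc_of_le (by norm_num)] at ht
    left; intro h; have := ht.2; linarith [sub_eq_zero.mp h] -- 1 - t = 0 → t = 1 > 1/2
  have h2 : IntervalIntegrable (w γ) volume (1/2) 1 := by
    have hc : IntervalIntegrable (fun t : ℝ => (1 - t) ^ (γ - 1)) volume (1/2) 1 := by
      have := (intervalIntegral.intervalIntegrable_rpow' (a := (0:ℝ)) (b := 1/2)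
        (r := γ - 1) (by linarith)).comp_sub_left 1
      norm_num at this
      exact this.symm
    apply hc.continuousOn_mul
    apply ContinuousOn.rpow_const continuousOn_id
    intro t ht
    rw [Set.uIcc_of_le (by norm_num)] at ht
    left; intro h; simp only [id_eq] at h; have := ht.1; rw [h] at this; linarith
  refine (h1.trans h2).mono_set ?_
  exact Set.uIcc_subset_uIcc (by rw [Set.uIcc_of_le (zero_le_one' ℝ)]; exact ha)
    (by rw [Set.uIcc_of_le (zero_le_one' ℝ)]; exact hb)


lemma int_w_pos {γ : ℝ} (hγ : 0 < γ) {a b : ℝ} (hab : a < b)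
    (ha : 0 ≤ a) (hb : b ≤ 1) : 0 < ∫ t in a..b, w γ t := by
  apply intervalIntegral_pos_of_pos_on
    (intInt_w hγ ⟨ha, by linarith⟩ ⟨by linarith, hb⟩)
  · intro t ht; exact w_pos (lt_of_le_of_lt ha ht.1) (lt_of_lt_of_le ht.2 hb)
  · exact hab

lemma w_symm (γ t : ℝ) : w γ (1 - t) = w γ t := by
  rw [w, w, sub_sub_cancel, mul_comm]

lemma betaB_eq {γ : ℝ} (hγ : 0 < γ) :
    betaB γ = 2 * ∫ t in (0:ℝ)..(1/2), w γ t := by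
  have h1 : IntervalIntegrable (w γ) volume 0 (1/2) := intInt_w hγ (by norm_num) (by norm_num)
  have h2 : IntervalIntegrable (w γ) volume (1/2) 1 := intInt_w hγ (by norm_num) (by norm_num)
  have key : (∫ t in (1/2:ℝ)..1, w γ t) = ∫ t in (0:ℝ)..(1/2), w γ t := by
    have h := intervalIntegral.integral_comp_sub_left (a := (0:ℝ)) (b := 1/2) (w γ) 1
    rw [show (1:ℝ) - 1/2 = 1/2 by norm_num, show (1:ℝ) - 0 = 1 by norm_num] at h
    rw [← h]
    exact intervalIntegral.integral_congr fun t _ => w_symm γ t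
  have hsplit : betaB γ = (∫ t in (0:ℝ)..(1/2), w γ t) + ∫ t in (1/2:ℝ)..1, w γ t := by
    have : betaB γ = ∫ t in (0:ℝ)..1, w γ t := rfl
    rw [this]
    exact (intervalIntegral.integral_add_adjacent_intervals h1 h2).symm
  rw [hsplit, key]; ring

lemma w_mul {α β t : ℝ} (h0 : 0 < t) (h1 : t < 1) :
    w β t = w α t * (t * (1 - t)) ^ (β - α) := by
  have h1' : (0:ℝ) < 1 - t := by linarith
  rw [w, w, Real.mul_rpow h0.le h1'.le, mul_mul_mul_comm,
    ← Real.rpow_add h0, ← Real.rpow_add h1']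
  congr 2 <;> ring

lemma claim1 {α β x : ℝ} (hα : 0 < α) (hαβ : α < β) (hx : x ∈ Set.Ioo (0:ℝ) (1/2)) :
    (∫ t in (0:ℝ)..x, w β t) < (x * (1 - x)) ^ (β - α) * ∫ t in (0:ℝ)..x, w α t := by
  obtain ⟨hx0, hx2⟩ := hx
  have hβ : 0 < β := hα.trans hαβ
  have hIα := intInt_w hα (a := 0) (b := x) (by norm_num) ⟨hx0.le, by linarith⟩
  have hIβ := intInt_w hβ (a := 0) (b := x) (by norm_num) ⟨hx0.le, by linarith⟩
  have key : 0 < ∫ t in (0:ℝ)..x, ((x * (1 - x)) ^ (β - α) * w α t - w β t) := by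
    apply intervalIntegral_pos_of_pos_on ((hIα.const_mul _).sub hIβ) _ hx0
    intro t ht
    obtain ⟨ht0, htx⟩ := ht
    have ht1 : t < 1 := by linarith
    have hlt : t * (1 - t) < x * (1 - x) := by nlinarith
    have : (t * (1 - t)) ^ (β - α) < (x * (1 - x)) ^ (β - α) :=
      Real.rpow_lt_rpow (by nlinarith) hlt (by linarith)
    have hw := w_pos (γ := α) ht0 ht1
    rw [w_mul (α := α) (β := β) ht0 ht1]
    nlinarith
  rw [intervalIntegral.integral_sub (hIα.const_mul _) hIβ,
    intervalIntegral.integral_const_mul] at key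
  linarith

lemma claim2 {α β x : ℝ} (hα : 0 < α) (hαβ : α < β) (hx : x ∈ Set.Ioo (0:ℝ) (1/2)) :
    (x * (1 - x)) ^ (β - α) * (∫ t in x..(1/2:ℝ), w α t) < ∫ t in x..(1/2:ℝ), w β t := by
  obtain ⟨hx0, hx2⟩ := hx
  have hβ : 0 < β := hα.trans hαβ
  have hIα := intInt_w hα (a := x) (b := 1/2) ⟨hx0.le, by linarith⟩ (by norm_num)
  have hIβ := intInt_w hβ (a := x) (b := 1/2) ⟨hx0.le, by linarith⟩ (by norm_num)
  have key : 0 < ∫ t in x..(1/2:ℝ), (w β t - (x * (1 - x)) ^ (β - α) * w α t) := by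
    apply intervalIntegral_pos_of_pos_on (hIβ.sub (hIα.const_mul _)) _ hx2
    intro t ht
    obtain ⟨htx, ht2⟩ := ht
    have ht0 : 0 < t := hx0.trans htx
    have ht1 : t < 1 := by linarith
    have hlt : x * (1 - x) < t * (1 - t) := by nlinarith
    have : (x * (1 - x)) ^ (β - α) < (t * (1 - t)) ^ (β - α) :=
      Real.rpow_lt_rpow (by nlinarith) hlt (by linarith)
    have hw := w_pos (γ := α) ht0 ht1
    rw [w_mul (α := α) (β := β) ht0 ht1]
    nlinarith
  rw [intervalIntegral.integral_sub hIβ (hIα.const_mul _),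
    intervalIntegral.integral_const_mul] at key
  linarith

end BetaAux

open BetaAux in
theorem Fbeta_strictAnti_in_alpha (x : ℝ) (hx : x ∈ Set.Ioo (0:ℝ) (1/2)) :
    StrictAntiOn (fun α : ℝ => Fbeta α x) (Set.Ioi (0:ℝ)) := by
  intro α hα' β hβ' hαβ
  simp only
  obtain ⟨hx0, hx2⟩ := hx
  have hα : (0:ℝ) < α := hα'
  have hβ : (0:ℝ) < β := hβ'
  have hF : ∀ γ : ℝ, Fbeta γ x = (∫ t in (0:ℝ)..x, w γ t) / betaB γ := by
    intro γ
    have : Fbeta γ x = ∫ t in (0:ℝ)..x, (w γ t / betaB γ) := rfl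
    rw [this, intervalIntegral.integral_div]
  have hxI : x ∈ Set.Icc (0:ℝ) 1 := ⟨hx0.le, by linarith⟩
  have hsplit : ∀ γ : ℝ, 0 < γ →
      (∫ t in (0:ℝ)..(1/2:ℝ), w γ t)
        = (∫ t in (0:ℝ)..x, w γ t) + ∫ t in x..(1/2:ℝ), w γ t :=
    fun γ hγ => (intervalIntegral.integral_add_adjacent_intervals
      (intInt_w hγ (by norm_num) hxI)
      (intInt_w hγ hxI (by norm_num))).symm
  have hIα : 0 < ∫ t in (0:ℝ)..x, w α t := int_w_pos hα hx0 le_rfl (by linarith)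
  have hIβ : 0 < ∫ t in (0:ℝ)..x, w β t := int_w_pos hβ hx0 le_rfl (by linarith)
  have hJα : 0 < ∫ t in x..(1/2:ℝ), w α t := int_w_pos hα hx2 hx0.le (by norm_num)
  have hJβ : 0 < ∫ t in x..(1/2:ℝ), w β t := int_w_pos hβ hx2 hx0.le (by norm_num)
  have hc1 := claim1 hα hαβ ⟨hx0, hx2⟩
  have hc2 := claim2 hα hαβ ⟨hx0, hx2⟩
  have hkey : (∫ t in (0:ℝ)..x, w β t) * (∫ t in x..(1/2:ℝ), w α t)
      < (∫ t in (0:ℝ)..x, w α t) * (∫ t in x..(1/2:ℝ), w β t) := by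
    nlinarith [mul_lt_mul_of_pos_right hc1 hJα, mul_lt_mul_of_pos_left hc2 hIα]
  rw [hF α, hF β, betaB_eq hα, betaB_eq hβ, hsplit α hα, hsplit β hβ,
    div_lt_div_iff₀ (by linarith) (by linarith)]
  nlinarith
end

section
/- The map φ⁻¹ : (α, β) ↦ (M, V) = (α/(α+β), αβ/((α+β)²(α+β+1))) is a bijection from (0,∞) × (0,∞) onto the dome D = {(M,V) ∈ (0,1) × (0,1) : V < M - M²}, with inverse φ(M,V) = (M(M - M² - V)/V, (1-M)(M - M² - V)/V). -/
noncomputable def toMV (p : ℝ × ℝ) : ℝ × ℝ :=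
  (p.1 / (p.1 + p.2), p.1 * p.2 / ((p.1 + p.2) ^ 2 * (p.1 + p.2 + 1)))

noncomputable def toAB (q : ℝ × ℝ) : ℝ × ℝ :=
  (q.1 * (q.1 - q.1 ^ 2 - q.2) / q.2, (1 - q.1) * (q.1 - q.1 ^ 2 - q.2) / q.2)

def Dome : Set (ℝ × ℝ) :=
  {q | q.1 ∈ Set.Ioo (0:ℝ) 1 ∧ q.2 ∈ Set.Ioo (0:ℝ) 1 ∧ q.2 < q.1 - q.1 ^ 2}

lemma mapsTo_MV : Set.MapsTo toMV (Set.Ioi (0:ℝ) ×ˢ Set.Ioi (0:ℝ)) Dome := by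
  rintro ⟨a, b⟩ ⟨ha, hb⟩
  simp only [Set.mem_Ioi] at ha hb
  have hs : (0:ℝ) < a + b := by linarith
  have hs1 : (0:ℝ) < a + b + 1 := by linarith
  have hMlt : a / (a + b) < 1 := by
    rw [div_lt_one hs]; linarith
  have hM : 0 < a / (a + b) := div_pos ha hs
  have hV : 0 < a * b / ((a + b) ^ 2 * (a + b + 1)) :=
    div_pos (mul_pos ha hb) (mul_pos (by positivity) hs1)
  have heq : a / (a + b) - (a / (a + b)) ^ 2 = a * b / (a + b) ^ 2 := by
    field_simp; ring
  have key : a * b / ((a + b) ^ 2 * (a + b + 1)) < a / (a + b) - (a / (a + b)) ^ 2 := by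
    rw [heq]
    apply div_lt_div_of_pos_left (mul_pos ha hb) (by positivity)
    nlinarith [pow_pos hs 3]
  refine ⟨⟨hM, hMlt⟩, ⟨hV, ?_⟩, key⟩
  have : a / (a + b) - (a / (a + b)) ^ 2 ≤ 1 / 4 := by
    nlinarith [sq_nonneg (a / (a + b) - 1 / 2)]
  show a * b / ((a + b) ^ 2 * (a + b + 1)) < 1
  linarith

lemma left_inv : Set.LeftInvOn toAB toMV (Set.Ioi (0:ℝ) ×ˢ Set.Ioi (0:ℝ)) := by
  rintro ⟨a, b⟩ ⟨ha, hb⟩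
  simp only [Set.mem_Ioi] at ha hb
  have hs : (0:ℝ) < a + b := by linarith
  have hs1 : (0:ℝ) < a + b + 1 := by linarith
  have hV : (0:ℝ) < a * b / ((a + b) ^ 2 * (a + b + 1)) :=
    div_pos (mul_pos ha hb) (mul_pos (by positivity) hs1)
  simp only [toMV, toAB, Prod.mk.injEq]
  constructor <;>
  · field_simp
    ring

lemma right_inv : Set.RightInvOn toAB toMV Dome := by
  rintro ⟨M, V⟩ ⟨⟨hM0, hM1⟩, ⟨hV0, _⟩, hlt⟩
  simp only at hM0 hM1 hV0 hlt
  have hd : (0:ℝ) < M - M ^ 2 - V := by linarith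
  have hα : (0:ℝ) < M * (M - M ^ 2 - V) / V := by positivity
  have hβ : (0:ℝ) < (1 - M) * (M - M ^ 2 - V) / V := by
    apply div_pos (mul_pos (by linarith) hd) hV0
  simp only [toMV, toAB, Prod.mk.injEq]
  have hsum : M * (M - M ^ 2 - V) / V + (1 - M) * (M - M ^ 2 - V) / V
      = (M - M ^ 2 - V) / V := by ring
  constructor
  · rw [hsum]
    field_simp
    exact div_self (ne_of_gt (by nlinarith))
  · rw [hsum]
    rw [div_eq_iff (by positivity : ((M - M ^ 2 - V) / V) ^ 2 * ((M - M ^ 2 - V) / V + 1) ≠ 0)]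
    field_simp
    ring

theorem toMV_bijOn :
    Set.BijOn toMV (Set.Ioi (0:ℝ) ×ˢ Set.Ioi (0:ℝ)) Dome ∧
    Set.InvOn toAB toMV (Set.Ioi (0:ℝ) ×ˢ Set.Ioi (0:ℝ)) Dome := by
  have hinv : Set.InvOn toAB toMV (Set.Ioi (0:ℝ) ×ˢ Set.Ioi (0:ℝ)) Dome :=
    ⟨left_inv, right_inv⟩
  have hmapsAB : Set.MapsTo toAB Dome (Set.Ioi (0:ℝ) ×ˢ Set.Ioi (0:ℝ)) := by
    rintro ⟨M, V⟩ ⟨⟨hM0, hM1⟩, ⟨hV0, _⟩, hlt⟩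
    simp only at hM0 hM1 hV0 hlt
    have hd : (0:ℝ) < M - M ^ 2 - V := by linarith
    exact ⟨by simpa [toAB] using div_pos (mul_pos hM0 hd) hV0,
      by simpa [toAB] using div_pos (mul_pos (by linarith : (0:ℝ) < 1 - M) hd) hV0⟩
  exact ⟨hinv.bijOn mapsTo_MV hmapsAB, hinv⟩
end

section
/- The map (α, β) ↦ (α/(α+β), αβ/((α+β)²(α+β+1))) from (0,∞)² onto the dome D = {(M,V) ∈ (0,1)² : V < M - M²} is a homeomorphism. -/
noncomputable def fromMV (q : ℝ × ℝ) : ℝ × ℝ :=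
  (q.1 * (q.1 - q.1 ^ 2 - q.2) / q.2, (1 - q.1) * (q.1 - q.1 ^ 2 - q.2) / q.2)

lemma toMV_mem_dome {a b : ℝ} (ha : 0 < a) (hb : 0 < b) : toMV (a, b) ∈ Dome := by
  have hs : 0 < a + b := by linarith
  have hd : 0 < (a + b) ^ 2 * (a + b + 1) := by positivity
  simp only [toMV, Dome, Set.mem_setOf_eq, Set.mem_Ioo]
  refine ⟨⟨by positivity, ?_⟩, ⟨by positivity, ?_⟩, ?_⟩
  · rw [div_lt_one hs]; linarith
  · rw [div_lt_one hd]; nlinarith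
  · rw [div_pow, div_sub_div _ _ hs.ne' (by positivity), div_lt_div_iff₀ hd (by positivity)]
    nlinarith [mul_pos (mul_pos ha hb) (mul_pos hs (mul_pos hs hs)),
      mul_pos (mul_pos ha hb) (mul_pos hs hs)]

lemma fromMV_mem {q : ℝ × ℝ} (hq : q ∈ Dome) :
    0 < (fromMV q).1 ∧ 0 < (fromMV q).2 := by
  obtain ⟨⟨hM0, hM1⟩, ⟨hV0, _⟩, hVW⟩ := hq
  have hW : 0 < q.1 - q.1 ^ 2 - q.2 := by linarith
  have h1M : 0 < 1 - q.1 := by linarith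
  constructor
  · simp only [fromMV]; positivity
  · simp only [fromMV]; positivity

lemma left_inv' {a b : ℝ} (ha : 0 < a) (hb : 0 < b) : fromMV (toMV (a, b)) = (a, b) := by
  have hs : a + b ≠ 0 := by positivity
  have hs1 : a + b + 1 ≠ 0 := by positivity
  have hV : a * b / ((a + b) ^ 2 * (a + b + 1)) ≠ 0 := by positivity
  simp only [fromMV, toMV, Prod.mk.injEq]
  constructor <;> (field_simp; ring)

lemma key_s10 (M V W : ℝ) (hV : V ≠ 0) (hW : W ≠ 0) (hM : M ≠ 0) (hM1 : 1 - M ≠ 0)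
    (hWV : W + V = M * (1 - M)) : toMV (M * W / V, (1 - M) * W / V) = (M, V) := by
  have hsum : M * W / V + (1 - M) * W / V = W / V := by ring
  simp only [toMV, hsum, Prod.mk.injEq]
  constructor
  · field_simp
  · have hden : (W / V) ^ 2 * (W / V + 1) = W ^ 2 * (M * (1 - M)) / V ^ 3 := by
      rw [← hWV, div_add' _ _ _ hV, div_pow, div_mul_div_comm,
        show V ^ 2 * V = V ^ 3 by ring]
      norm_num
    rw [hden]
    field_simp

lemma right_inv' {q : ℝ × ℝ} (hq : q ∈ Dome) : toMV (fromMV q) = q := by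
  obtain ⟨⟨hM0, hM1⟩, ⟨hV0, _⟩, hVW⟩ := hq
  have hW : 0 < q.1 - q.1 ^ 2 - q.2 := by linarith
  have := key_s10 q.1 q.2 (q.1 - q.1 ^ 2 - q.2) (ne_of_gt hV0) (ne_of_gt hW)
    (ne_of_gt hM0) (by linarith) (by ring)
  simpa [fromMV] using this

theorem toMV_homeomorph :
    ∃ h : (Set.Ioi (0:ℝ) ×ˢ Set.Ioi (0:ℝ) : Set (ℝ × ℝ)) ≃ₜ Dome,
      ∀ p : (Set.Ioi (0:ℝ) ×ˢ Set.Ioi (0:ℝ) : Set (ℝ × ℝ)), (h p : ℝ × ℝ) = toMV p := by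
  have hmem : ∀ p : (Set.Ioi (0:ℝ) ×ˢ Set.Ioi (0:ℝ) : Set (ℝ × ℝ)), toMV p ∈ Dome := by
    rintro ⟨⟨a, b⟩, ha, hb⟩
    exact toMV_mem_dome ha hb
  have hmem' : ∀ q : Dome, fromMV q ∈ (Set.Ioi (0:ℝ) ×ˢ Set.Ioi (0:ℝ) : Set (ℝ × ℝ)) := by
    rintro ⟨q, hq⟩
    exact fromMV_mem hq
  refine ⟨{ toFun := fun p => ⟨toMV p, hmem p⟩
            invFun := fun q => ⟨fromMV q, hmem' q⟩
            left_inv := ?_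
            right_inv := ?_
            continuous_toFun := ?_
            continuous_invFun := ?_ }, fun p => rfl⟩
  · rintro ⟨⟨a, b⟩, ha, hb⟩
    simp only [Subtype.mk.injEq]
    exact Subtype.ext (left_inv' ha hb)
  · rintro ⟨q, hq⟩
    simp only [Subtype.mk.injEq]
    exact right_inv' hq
  · apply Continuous.subtype_mk
    have h1 : Continuous fun p : (Set.Ioi (0:ℝ) ×ˢ Set.Ioi (0:ℝ) : Set (ℝ × ℝ)) => (p : ℝ × ℝ).1 :=
      continuous_fst.comp continuous_subtype_val
    have h2 : Continuous fun p : (Set.Ioi (0:ℝ) ×ˢ Set.Ioi (0:ℝ) : Set (ℝ × ℝ)) => (p : ℝ × ℝ).2 :=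
      continuous_snd.comp continuous_subtype_val
    have hpos : ∀ p : (Set.Ioi (0:ℝ) ×ˢ Set.Ioi (0:ℝ) : Set (ℝ × ℝ)),
        0 < (p : ℝ × ℝ).1 + (p : ℝ × ℝ).2 := by
      rintro ⟨⟨a, b⟩, ha, hb⟩
      have ha' : (0:ℝ) < a := ha
      have hb' : (0:ℝ) < b := hb
      simpa using by linarith
    apply Continuous.prodMk
    · exact h1.div (h1.add h2) fun p => (hpos p).ne'
    · exact (h1.mul h2).div (((h1.add h2).pow 2).mul ((h1.add h2).add continuous_const))
        (fun p => by have := hpos p; positivity)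
  · apply Continuous.subtype_mk
    have h1 : Continuous fun q : Dome => (q : ℝ × ℝ).1 :=
      continuous_fst.comp continuous_subtype_val
    have h2 : Continuous fun q : Dome => (q : ℝ × ℝ).2 :=
      continuous_snd.comp continuous_subtype_val
    have hne : ∀ q : Dome, (q : ℝ × ℝ).2 ≠ 0 := by
      rintro ⟨q, _, ⟨hV0, _⟩, _⟩
      exact ne_of_gt hV0
    apply Continuous.prodMk
    · exact (h1.mul ((h1.sub (h1.pow 2)).sub h2)).div h2 hne
    · exact ((continuous_const.sub h1).mul ((h1.sub (h1.pow 2)).sub h2)).div h2 hne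
end

section
/- Under the bijection (α, β) ↦ (M, V) = (α/(α+β), αβ/((α+β)²(α+β+1))), the region α > 1 and β > 1 is mapped exactly onto {(M,V) : M ∈ (0,1), V < min(M²(1-M)/(1+M), M(1-M)²/(2-M))}. -/
noncomputable def C₁ (M : ℝ) : ℝ := M ^ 2 * (1 - M) / (1 + M)
noncomputable def C₂ (M : ℝ) : ℝ := M * (1 - M) ^ 2 / (2 - M)

theorem image_arched :
    toMV '' (Set.Ioi (1:ℝ) ×ˢ Set.Ioi (1:ℝ)) =
      {q : ℝ × ℝ | q.1 ∈ Set.Ioo (0:ℝ) 1 ∧ 0 < q.2 ∧ q.2 < min (C₁ q.1) (C₂ q.1)} := by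
  ext ⟨M, V⟩
  simp only [Set.mem_image, Set.mem_prod, Set.mem_Ioi, Set.mem_setOf_eq, Set.mem_Ioo,
    lt_min_iff, Prod.exists, toMV, Prod.mk.injEq]
  constructor
  · rintro ⟨a, b, ⟨ha, hb⟩, hM, hV⟩
    have h0a : (0:ℝ) < a := by linarith
    have h0b : (0:ℝ) < b := by linarith
    have hs : (0:ℝ) < a + b := by linarith
    subst hM hV
    refine ⟨⟨by positivity, ?_⟩, by positivity, ?_, ?_⟩
    · rw [div_lt_one hs]; linarith
    · have hC : C₁ (a / (a + b)) = a ^ 2 * b / ((a + b) ^ 2 * (a + b + a)) := by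
        unfold C₁; field_simp; ring
      rw [hC, div_lt_div_iff₀ (by positivity) (by positivity)]
      have key := mul_pos (mul_pos (mul_pos h0a h0b) (pow_pos hs 4))
        (show (0:ℝ) < a - 1 by linarith)
      nlinarith [key]
    · have h2 : (2:ℝ) - a / (a + b) = (a + b + b) / (a + b) := by field_simp; ring
      have hC : C₂ (a / (a + b)) = a * b ^ 2 / ((a + b) ^ 2 * (a + b + b)) := by
        unfold C₂
        rw [h2, div_div_eq_mul_div, div_eq_div_iff (by positivity) (by positivity)]
        field_simp
        ring
      rw [hC, div_lt_div_iff₀ (by positivity) (by positivity)]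
      have key := mul_pos (mul_pos (mul_pos h0a h0b) (pow_pos hs 4))
        (show (0:ℝ) < b - 1 by linarith)
      nlinarith [key]
      
  · rintro ⟨⟨hM0, hM1⟩, hV0, hC1, hC2⟩
    unfold C₁ at hC1
    unfold C₂ at hC2
    rw [lt_div_iff₀ (by linarith)] at hC1
    rw [lt_div_iff₀ (by linarith)] at hC2
    set s : ℝ := M * (1 - M) / V - 1 with hs_def
    have hMV : M * (1 - M) = V * (s + 1) := by
      rw [hs_def]; field_simp; ring
    have hMs : 1 < M * s := by
      have h : M * s = M ^ 2 * (1 - M) / V - M := by rw [hs_def]; field_simp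
      rw [h, lt_sub_iff_add_lt, lt_div_iff₀ hV0]
      nlinarith
    have hMs' : 1 < (1 - M) * s := by
      have h : (1 - M) * s = M * (1 - M) ^ 2 / V - (1 - M) := by rw [hs_def]; field_simp
      rw [h, lt_sub_iff_add_lt, lt_div_iff₀ hV0]
      nlinarith
    have hs0 : 0 < s := by nlinarith
    refine ⟨M * s, (1 - M) * s, ⟨hMs, hMs'⟩, ?_, ?_⟩
    · have h1 : M * s + (1 - M) * s = s := by ring
      rw [h1]
      field_simp
    · have h1 : M * s + (1 - M) * s = s := by ring
      rw [h1]
      rw [eq_comm, eq_div_iff (by positivity)]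
      nlinarith [hMV]
end

section
/- Under the bijection (α, β) ↦ (M, V) = (α/(α+β), αβ/((α+β)²(α+β+1))), the region 0 < α < 1 and 0 < β < 1 is mapped exactly onto {(M,V) : M ∈ (0,1), max(M²(1-M)/(1+M), M(1-M)²/(2-M)) < V < M - M²}. -/
theorem image_Ushaped :
    toMV '' (Set.Ioo (0:ℝ) 1 ×ˢ Set.Ioo (0:ℝ) 1) =
      {q : ℝ × ℝ | q.1 ∈ Set.Ioo (0:ℝ) 1 ∧
        max (C₁ q.1) (C₂ q.1) < q.2 ∧ q.2 < q.1 - q.1 ^ 2} := by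
  ext ⟨M, V⟩
  simp only [Set.mem_image, Set.mem_prod, Set.mem_Ioo, Set.mem_setOf_eq, Prod.exists]
  constructor
  · rintro ⟨α, β, ⟨⟨hα0, hα1⟩, hβ0, hβ1⟩, hMV⟩
    have hs : (0:ℝ) < α + β := by linarith
    have hs1 : (0:ℝ) < α + β + 1 := by linarith
    simp only [toMV, Prod.mk.injEq] at hMV
    obtain ⟨hM, hV⟩ := hMV
    subst hM hV
    have hsa : (0:ℝ) < α + β + α := by linarith
    have hsb : (0:ℝ) < 2 * (α + β) - α := by linarith
    refine ⟨⟨div_pos hα0 hs, (div_lt_one hs).mpr (by linarith)⟩, ?_, ?_⟩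
    · have e1 : C₁ (α / (α + β)) = α ^ 2 * β / ((α + β) ^ 2 * (α + β + α)) := by
        unfold C₁
        field_simp
        ring
      have e2 : C₂ (α / (α + β)) = α * β ^ 2 / ((α + β) ^ 2 * (2 * (α + β) - α)) := by
        unfold C₂
        field_simp
        ring
      rw [max_lt_iff, e1, e2]
      constructor
      · rw [div_lt_div_iff₀ (by positivity) (by positivity)]
        nlinarith [mul_pos (mul_pos (mul_pos hα0 hβ0) (pow_pos hs 3)) (by linarith : (0:ℝ) < 1 - α)]
      · rw [div_lt_div_iff₀ (by positivity) (by positivity)]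
        nlinarith [mul_pos (mul_pos (mul_pos hα0 hβ0) (pow_pos hs 3)) (by linarith : (0:ℝ) < 1 - β)]
    · have e3 : α / (α + β) - (α / (α + β)) ^ 2 = α * β / (α + β) ^ 2 := by
        field_simp
        ring
      rw [e3, div_lt_div_iff₀ (by positivity) (by positivity)]
      nlinarith [mul_pos (mul_pos hα0 hβ0) (pow_pos hs 2)]
  · rintro ⟨⟨hM0, hM1⟩, hmax, hV⟩
    rw [max_lt_iff] at hmax
    obtain ⟨hC1, hC2⟩ := hmax
    have hC1pos : 0 < C₁ M := by unfold C₁; exact div_pos (mul_pos (pow_pos hM0 2) (by linarith)) (by linarith)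
    have hV0 : 0 < V := lt_trans hC1pos hC1
    obtain ⟨s, hs_def⟩ : ∃ s : ℝ, s = M * (1 - M) / V - 1 := ⟨_, rfl⟩
    have hsV : (s + 1) * V = M * (1 - M) := by
      rw [hs_def]; field_simp; ring
    have hs0 : 0 < s := by
      have h1 : V < M * (1 - M) := by nlinarith
      have : 1 < M * (1 - M) / V := (one_lt_div hV0).mpr h1
      linarith [this]
    have hC1' : M ^ 2 * (1 - M) < V * (1 + M) := by
      have := (div_lt_iff₀ (by linarith : (0:ℝ) < 1 + M)).mp hC1
      linarith
    have hC2' : M * (1 - M) ^ 2 < V * (2 - M) := by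
      have := (div_lt_iff₀ (by linarith : (0:ℝ) < 2 - M)).mp hC2
      linarith
    have hMs1 : M * s < 1 := by nlinarith
    have hNs1 : (1 - M) * s < 1 := by nlinarith
    refine ⟨M * s, (1 - M) * s, ⟨⟨mul_pos hM0 hs0, hMs1⟩,
      ⟨mul_pos (by linarith) hs0, hNs1⟩⟩, ?_⟩
    have hsum : M * s + (1 - M) * s = s := by ring
    unfold toMV
    simp only [hsum]
    refine Prod.ext ?_ ?_
    · simp only
      rw [mul_div_assoc, div_self hs0.ne', mul_one]
    · simp only
      rw [div_eq_iff (ne_of_gt (mul_pos (pow_pos hs0 2) (by linarith)))]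
      linear_combination (-(s ^ 2)) * hsV
end

section
/- Let M ∈ (0,1) and V₁, V₂ ∈ (0, M - M²) with V₁ ≠ V₂. Then the equation F_{M,V₁}(x) = F_{M,V₂}(x) has exactly one solution x_c in the open interval (0,1); moreover if V₁ < V₂ then F_{M,V₁}(x) < F_{M,V₂}(x) for x ∈ (0, x_c) and F_{M,V₂}(x) < F_{M,V₁}(x) for x ∈ (x_c, 1). -/
open MeasureTheory intervalIntegral

noncomputable def betaCDF (α β t : ℝ) : ℝ :=
  (∫ x in (0:ℝ)..t, x ^ (α - 1) * (1 - x) ^ (β - 1)) /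
    ∫ x in (0:ℝ)..1, x ^ (α - 1) * (1 - x) ^ (β - 1)

noncomputable def FMV (M V t : ℝ) : ℝ :=
  betaCDF (M * (M - M ^ 2 - V) / V) ((1 - M) * (M - M ^ 2 - V) / V) t

section AuxSingleCrossing
open Set

noncomputable def bker (a b : ℝ) : ℝ → ℝ := fun x => x ^ (a - 1) * (1 - x) ^ (b - 1)

theorem bker_conv_left {a : ℝ} (ha : 0 < a) (b : ℝ) :
    IntervalIntegrable (bker a b) volume 0 (1 / 2) := by
  apply IntervalIntegrable.mul_continuousOn
  · exact intervalIntegral.intervalIntegrable_rpow' (by linarith)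
  · apply continuousOn_of_forall_continuousAt
    intro x hx
    rw [uIcc_of_le (by positivity : (0 : ℝ) ≤ 1 / 2)] at hx
    apply ContinuousAt.rpow_const
    · exact (continuous_const.sub continuous_id).continuousAt
    · left; intro h; linarith [hx.2]

theorem bker_conv {a b : ℝ} (ha : 0 < a) (hb : 0 < b) :
    IntervalIntegrable (bker a b) volume 0 1 := by
  refine (bker_conv_left ha b).trans ?_
  rw [IntervalIntegrable.iff_comp_neg]
  convert ((bker_conv_left hb a).comp_add_right 1).symm using 1
  · ext1 x
    simp only [bker]
    conv_lhs => rw [mul_comm]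
    congr 2 <;> ring
  · norm_num
  · norm_num

noncomputable def bint (a b t : ℝ) : ℝ := ∫ x in (0:ℝ)..t, bker a b x

theorem bker_contOn (a b : ℝ) : ContinuousOn (bker a b) (Ioo 0 1) := by
  intro x hx
  apply ContinuousWithinAt.mul
  · exact ((Real.continuousAt_rpow_const x _ (Or.inl (ne_of_gt hx.1))).continuousWithinAt)
  · exact (((continuous_const.sub continuous_id).continuousAt).rpow_const
      (Or.inl (by simp; intro h; linarith [hx.2]))).continuousWithinAt

theorem bker_pos {a b x : ℝ} (hx : x ∈ Ioo (0:ℝ) 1) : 0 < bker a b x := by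
  have : (0:ℝ) < 1 - x := by linarith [hx.2]
  exact mul_pos (Real.rpow_pos_of_pos hx.1 _) (Real.rpow_pos_of_pos this _)

theorem bint_contOn {a b : ℝ} (ha : 0 < a) (hb : 0 < b) :
    ContinuousOn (bint a b) (Icc 0 1) := by
  have h := (bker_conv ha hb).1
  have : IntegrableOn (bker a b) (uIcc 0 1) volume := by
    rw [uIcc_of_le zero_le_one]
    rw [integrableOn_Icc_iff_integrableOn_Ioc]
    exact h
  have h2 := continuousOn_primitive_interval (μ := volume) (f := bker a b) this
  rw [uIcc_of_le zero_le_one] at h2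
  exact h2

theorem bint_hasDeriv {a b t : ℝ} (ha : 0 < a) (hb : 0 < b) (ht : t ∈ Ioo (0:ℝ) 1) :
    HasDerivAt (bint a b) (bker a b t) t := by
  apply intervalIntegral.integral_hasDerivAt_right
  · exact (bker_conv ha hb).mono_set (by
      rw [uIcc_of_le (le_of_lt ht.1), uIcc_of_le zero_le_one]
      exact Icc_subset_Icc le_rfl (le_of_lt ht.2))
  · exact (bker_contOn a b).stronglyMeasurableAtFilter isOpen_Ioo _ ht
  · exact (bker_contOn a b).continuousAt (isOpen_Ioo.mem_nhds ht)

theorem bint_one_pos {a b : ℝ} (ha : 0 < a) (hb : 0 < b) : 0 < bint a b 1 :=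
  intervalIntegral.intervalIntegral_pos_of_pos_on (bker_conv ha hb)
    (fun x hx => bker_pos hx) one_pos

theorem bint_zero (a b : ℝ) : bint a b 0 = 0 := by simp [bint]

noncomputable def rker (p q x : ℝ) : ℝ := x ^ p * (1 - x) ^ q

theorem rker_cont {p q : ℝ} (hp : 0 < p) (hq : 0 < q) : Continuous (rker p q) :=
  (Real.continuous_rpow_const hp.le).mul
    ((Real.continuous_rpow_const hq.le).comp (continuous_const.sub continuous_id))

theorem rker_zero {p q : ℝ} (hp : 0 < p) : rker p q 0 = 0 := by
  simp [rker, Real.zero_rpow hp.ne']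

theorem rker_one {p q : ℝ} (hq : 0 < q) : rker p q 1 = 0 := by
  simp [rker, Real.zero_rpow hq.ne']

theorem rker_pos {p q x : ℝ} (hx : x ∈ Ioo (0:ℝ) 1) : 0 < rker p q x :=
  mul_pos (Real.rpow_pos_of_pos hx.1 _) (Real.rpow_pos_of_pos (by linarith [hx.2]) _)

theorem rker_hasDeriv {p q x : ℝ} (hx : x ∈ Ioo (0:ℝ) 1) :
    HasDerivAt (rker p q)
      (x ^ (p - 1) * (1 - x) ^ (q - 1) * (p * (1 - x) - q * x)) x := by
  have hx0 : x ≠ 0 := ne_of_gt hx.1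
  have hx1 : (1:ℝ) - x ≠ 0 := by intro h; have := hx.2; nlinarith [hx.2]
  have h1 : HasDerivAt (fun y : ℝ => y ^ p) (p * x ^ (p - 1)) x :=
    Real.hasDerivAt_rpow_const (Or.inl hx0)
  have h2 : HasDerivAt (fun y : ℝ => (1 - y) ^ q) (q * (1 - x) ^ (q - 1) * (-1)) x := by
    have := (Real.hasDerivAt_rpow_const (p := q) (Or.inl hx1)).comp x
      ((hasDerivAt_id x).const_sub 1)
    simpa [Function.comp_def] using this
  have := h1.mul h2
  refine this.congr_deriv ?_
  have e1 : x ^ p = x ^ (p - 1) * x := by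
    rw [← Real.rpow_add_one hx0]; ring_nf
  have e2 : (1 - x) ^ q = (1 - x) ^ (q - 1) * (1 - x) := by
    rw [← Real.rpow_add_one hx1]; ring_nf
  rw [e1, e2]; ring

theorem rker_strictMonoOn {p q : ℝ} (hp : 0 < p) (hq : 0 < q) :
    StrictMonoOn (rker p q) (Icc 0 (p / (p + q))) := by
  have hpq : 0 < p + q := by linarith
  have hm1 : p / (p + q) < 1 := (div_lt_one hpq).2 (by linarith)
  apply strictMonoOn_of_deriv_pos (convex_Icc _ _) ((rker_cont hp hq).continuousOn)
  intro x hx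
  rw [interior_Icc] at hx
  have hx' : x ∈ Ioo (0:ℝ) 1 := ⟨hx.1, lt_trans hx.2 hm1⟩
  rw [(rker_hasDeriv hx').deriv]
  have h1 : 0 < x ^ (p - 1) := Real.rpow_pos_of_pos hx'.1 _
  have h2 : 0 < (1 - x) ^ (q - 1) := Real.rpow_pos_of_pos (by linarith [hx'.2]) _
  have h3 : 0 < p * (1 - x) - q * x := by
    nlinarith [(lt_div_iff₀ hpq).1 hx.2]
  positivity

theorem rker_strictAntiOn {p q : ℝ} (hp : 0 < p) (hq : 0 < q) :
    StrictAntiOn (rker p q) (Icc (p / (p + q)) 1) := by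
  have hpq : 0 < p + q := by linarith
  have hm0 : 0 < p / (p + q) := div_pos hp hpq
  apply strictAntiOn_of_deriv_neg (convex_Icc _ _) ((rker_cont hp hq).continuousOn)
  intro x hx
  rw [interior_Icc] at hx
  have hx' : x ∈ Ioo (0:ℝ) 1 := ⟨lt_trans hm0 hx.1, hx.2⟩
  rw [(rker_hasDeriv hx').deriv]
  have h1 : 0 < x ^ (p - 1) := Real.rpow_pos_of_pos hx'.1 _
  have h2 : 0 < (1 - x) ^ (q - 1) := Real.rpow_pos_of_pos (by linarith [hx'.2]) _
  have h3 : p * (1 - x) - q * x < 0 := by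
    nlinarith [(div_lt_iff₀ hpq).1 hx.1]
  nlinarith [mul_pos h1 h2, mul_pos (mul_pos h1 h2) (neg_pos.2 h3)]

noncomputable def betaCDF' (α β t : ℝ) : ℝ :=
  (∫ x in (0:ℝ)..t, x ^ (α - 1) * (1 - x) ^ (β - 1)) /
    ∫ x in (0:ℝ)..1, x ^ (α - 1) * (1 - x) ^ (β - 1)

theorem betaCDF'_eq (a b t : ℝ) : betaCDF' a b t = bint a b t / bint a b 1 := rfl

theorem master {a₁ b₁ a₂ b₂ : ℝ} (ha₂ : 0 < a₂) (hb₂ : 0 < b₂) (haa : a₂ < a₁)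
    (hbb : b₂ < b₁) :
    ∃ xc ∈ Ioo (0:ℝ) 1,
      (∀ x ∈ Ioo (0:ℝ) 1, (betaCDF' a₁ b₁ x = betaCDF' a₂ b₂ x ↔ x = xc)) ∧
      (∀ x ∈ Ioo 0 xc, betaCDF' a₁ b₁ x < betaCDF' a₂ b₂ x) ∧
      (∀ x ∈ Ioo xc 1, betaCDF' a₂ b₂ x < betaCDF' a₁ b₁ x) := by
  have ha₁ : 0 < a₁ := lt_trans ha₂ haa
  have hb₁ : 0 < b₁ := lt_trans hb₂ hbb
  set p := a₁ - a₂ with hp_def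
  set q := b₁ - b₂ with hq_def
  have hp : 0 < p := sub_pos.2 haa
  have hq : 0 < q := sub_pos.2 hbb
  have hpq : 0 < p + q := by linarith
  set m := p / (p + q) with hm_def
  have hm0 : 0 < m := div_pos hp hpq
  have hm1 : m < 1 := (div_lt_one hpq).2 (by linarith)
  set B₁ := bint a₁ b₁ 1 with hB₁_def
  set B₂ := bint a₂ b₂ 1 with hB₂_def
  have hB₁ : 0 < B₁ := bint_one_pos ha₁ hb₁
  have hB₂ : 0 < B₂ := bint_one_pos ha₂ hb₂
  set G : ℝ → ℝ := fun t => B₂ * bint a₁ b₁ t - B₁ * bint a₂ b₂ t with hG_def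
  have key : ∀ x ∈ Ioo (0:ℝ) 1, bker a₁ b₁ x = bker a₂ b₂ x * rker p q x := by
    intro x hx
    have hx1 : (0:ℝ) < 1 - x := by linarith [hx.2]
    simp only [bker, rker]
    rw [show a₁ - 1 = (a₂ - 1) + p by rw [hp_def]; ring,
      show b₁ - 1 = (b₂ - 1) + q by rw [hq_def]; ring,
      Real.rpow_add hx.1, Real.rpow_add hx1]
    ring
  have hGc : ContinuousOn G (Icc 0 1) :=
    (continuousOn_const.mul (bint_contOn ha₁ hb₁)).sub
      (continuousOn_const.mul (bint_contOn ha₂ hb₂))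
  have hG0 : G 0 = 0 := by simp [hG_def, bint_zero]
  have hG1 : G 1 = 0 := by simp only [hG_def, ← hB₁_def, ← hB₂_def]; ring
  have hGd : ∀ t ∈ Ioo (0:ℝ) 1,
      HasDerivAt G (bker a₂ b₂ t * (B₂ * rker p q t - B₁)) t := by
    intro t ht
    have h := ((bint_hasDeriv ha₁ hb₁ ht).const_mul B₂).sub
      ((bint_hasDeriv ha₂ hb₂ ht).const_mul B₁)
    refine h.congr_deriv ?_
    rw [key t ht]; ring
  have hmono := rker_strictMonoOn hp hq
  have hanti := rker_strictAntiOn hp hq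
  rw [← hm_def] at hmono hanti
  have hrmax : ∀ t ∈ Ioo (0:ℝ) 1, rker p q t ≤ rker p q m := by
    intro t ht
    rcases lt_trichotomy t m with h | h | h
    · exact (hmono ⟨ht.1.le, h.le⟩ ⟨hm0.le, le_rfl⟩ h).le
    · rw [h]
    · exact (hanti ⟨le_rfl, hm1.le⟩ ⟨h.le, ht.2.le⟩ h).le
  -- the max of r must exceed B₁/B₂
  have hrm : B₁ < B₂ * rker p q m := by
    by_contra hcon
    push_neg at hcon
    have h1 : StrictAntiOn G (Icc 0 m) := by
      apply strictAntiOn_of_deriv_neg (convex_Icc _ _)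
        (hGc.mono (Icc_subset_Icc le_rfl hm1.le))
      intro x hx
      rw [interior_Icc] at hx
      have hx' : x ∈ Ioo (0:ℝ) 1 := ⟨hx.1, hx.2.trans hm1⟩
      rw [(hGd x hx').deriv]
      have hr : rker p q x < rker p q m := hmono ⟨hx.1.le, hx.2.le⟩ ⟨hm0.le, le_rfl⟩ hx.2
      have hw := bker_pos (a := a₂) (b := b₂) hx'
      have h5 : B₂ * rker p q x - B₁ < 0 := by nlinarith
      exact mul_neg_of_pos_of_neg hw h5
    have h2 : AntitoneOn G (Icc m 1) := by
      apply antitoneOn_of_deriv_nonpos (convex_Icc _ _)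
        (hGc.mono (Icc_subset_Icc hm0.le le_rfl))
      · intro x hx
        rw [interior_Icc] at hx
        exact (hGd x ⟨hm0.trans hx.1, hx.2⟩).differentiableAt.differentiableWithinAt
      · intro x hx
        rw [interior_Icc] at hx
        have hx' : x ∈ Ioo (0:ℝ) 1 := ⟨hm0.trans hx.1, hx.2⟩
        rw [(hGd x hx').deriv]
        have hr : rker p q x ≤ rker p q m := hrmax x hx'
        have hw := (bker_pos (a := a₂) (b := b₂) hx').le
        have h5 : B₂ * rker p q x - B₁ ≤ 0 := by nlinarith
        exact mul_nonpos_of_nonneg_of_nonpos hw h5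
    have e1 : G m < G 0 := h1 ⟨le_rfl, hm0.le⟩ ⟨hm0.le, le_rfl⟩ hm0
    have e2 : G 1 ≤ G m := h2 ⟨le_rfl, hm1.le⟩ ⟨hm1.le, le_rfl⟩ hm1.le
    rw [hG0] at e1; rw [hG1] at e2; linarith
  -- crossing points u < m < v of r with B₁/B₂
  have hκ0 : 0 < B₁ / B₂ := div_pos hB₁ hB₂
  have hκm : B₁ / B₂ < rker p q m := by rw [div_lt_iff₀ hB₂]; linarith
  obtain ⟨u, humem, hu⟩ := intermediate_value_Icc hm0.le ((rker_cont hp hq).continuousOn)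
    (show B₁ / B₂ ∈ Icc (rker p q 0) (rker p q m) by
      rw [rker_zero hp]; exact ⟨hκ0.le, hκm.le⟩)
  have hu0 : 0 < u := lt_of_le_of_ne humem.1 (by
    rintro rfl; rw [rker_zero hp] at hu; exact absurd hu.symm (ne_of_gt hκ0))
  have hum : u < m := lt_of_le_of_ne humem.2 (by
    rintro rfl; rw [hu] at hκm; exact lt_irrefl _ hκm)
  obtain ⟨v, hvmem, hv⟩ := intermediate_value_Icc' hm1.le ((rker_cont hp hq).continuousOn)
    (show B₁ / B₂ ∈ Icc (rker p q 1) (rker p q m) by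
      rw [rker_one hq]; exact ⟨hκ0.le, hκm.le⟩)
  have hmv : m < v := lt_of_le_of_ne hvmem.1 (by
    rintro rfl; rw [hv] at hκm; exact lt_irrefl _ hκm)
  have hv1 : v < 1 := lt_of_le_of_ne hvmem.2 (by
    rintro rfl; rw [rker_one hq] at hv; exact absurd hv.symm (ne_of_gt hκ0))
  -- monotonicity pattern of G
  have hGneg1 : StrictAntiOn G (Icc 0 u) := by
    apply strictAntiOn_of_deriv_neg (convex_Icc _ _)
      (hGc.mono (Icc_subset_Icc le_rfl (hum.trans hm1).le))
    intro x hx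
    rw [interior_Icc] at hx
    have hx' : x ∈ Ioo (0:ℝ) 1 := ⟨hx.1, (hx.2.trans hum).trans hm1⟩
    rw [(hGd x hx').deriv]
    have hr : rker p q x < rker p q u :=
      hmono ⟨hx.1.le, (hx.2.trans hum).le⟩ ⟨hu0.le, hum.le⟩ hx.2
    have hw := bker_pos (a := a₂) (b := b₂) hx'
    have hru : rker p q u = B₁ / B₂ := hu
    have h5 : B₂ * rker p q x - B₁ < 0 := by
      rw [hru] at hr
      have := (lt_div_iff₀ hB₂).1 hr
      linarith
    exact mul_neg_of_pos_of_neg hw h5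
  have hGmonoUV : StrictMonoOn G (Icc u v) := by
    apply strictMonoOn_of_deriv_pos (convex_Icc _ _)
      (hGc.mono (Icc_subset_Icc hu0.le hv1.le))
    intro x hx
    rw [interior_Icc] at hx
    have hx' : x ∈ Ioo (0:ℝ) 1 := ⟨hu0.trans hx.1, hx.2.trans hv1⟩
    rw [(hGd x hx').deriv]
    have hr : B₁ < B₂ * rker p q x := by
      rcases le_total x m with h | h
      · have h6 : rker p q u < rker p q x := hmono ⟨hu0.le, hum.le⟩ ⟨hx'.1.le, h⟩ hx.1
        rw [hu] at h6
        have := (div_lt_iff₀ hB₂).1 h6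
        linarith
      · have h6 : rker p q v < rker p q x := hanti ⟨h, hx'.2.le⟩ ⟨hmv.le, hv1.le⟩ hx.2
        rw [hv] at h6
        have := (div_lt_iff₀ hB₂).1 h6
        linarith
    have hw := bker_pos (a := a₂) (b := b₂) hx'
    exact mul_pos hw (by linarith)
  have hGanti2 : StrictAntiOn G (Icc v 1) := by
    apply strictAntiOn_of_deriv_neg (convex_Icc _ _)
      (hGc.mono (Icc_subset_Icc (hm0.trans hmv).le le_rfl))
    intro x hx
    rw [interior_Icc] at hx
    have hx' : x ∈ Ioo (0:ℝ) 1 := ⟨(hm0.trans hmv).trans hx.1, hx.2⟩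
    rw [(hGd x hx').deriv]
    have hr : rker p q x < rker p q v :=
      hanti ⟨hmv.le, hv1.le⟩ ⟨(hmv.trans hx.1).le, hx.2.le⟩ hx.1
    have hw := bker_pos (a := a₂) (b := b₂) hx'
    have h5 : B₂ * rker p q x - B₁ < 0 := by
      rw [hv] at hr
      have := (lt_div_iff₀ hB₂).1 hr
      linarith
    exact mul_neg_of_pos_of_neg hw h5
  have hGu : G u < 0 := by
    have := hGneg1 ⟨le_rfl, hu0.le⟩ ⟨hu0.le, le_rfl⟩ hu0
    rwa [hG0] at this
  have hGv : 0 < G v := by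
    have := hGanti2 ⟨le_rfl, hv1.le⟩ ⟨hv1.le, le_rfl⟩ hv1
    rwa [hG1] at this
  have huv : u < v := hum.trans hmv
  obtain ⟨xc, hxcmem, hGxc⟩ := intermediate_value_Icc huv.le
    (hGc.mono (Icc_subset_Icc hu0.le hv1.le)) ⟨hGu.le, hGv.le⟩
  have hxcu : u < xc := lt_of_le_of_ne hxcmem.1 (by
    rintro rfl; exact absurd hGxc (ne_of_lt hGu))
  have hxcv : xc < v := lt_of_le_of_ne hxcmem.2 (by
    rintro rfl; exact absurd hGxc (ne_of_gt hGv))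
  have hxc0 : 0 < xc := hu0.trans hxcu
  have hxc1 : xc < 1 := hxcv.trans hv1
  have hGneg : ∀ x ∈ Ioo (0:ℝ) xc, G x < 0 := by
    intro x hx
    rcases le_total x u with h | h
    · have := hGneg1 ⟨le_rfl, hu0.le⟩ ⟨hx.1.le, h⟩ hx.1
      rwa [hG0] at this
    · have := hGmonoUV ⟨h, (hx.2.trans hxcv).le⟩ ⟨hxcu.le, hxcv.le⟩ hx.2
      rwa [hGxc] at this
  have hGpos : ∀ x ∈ Ioo xc (1:ℝ), 0 < G x := by
    intro x hx
    rcases le_total x v with h | h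
    · have := hGmonoUV ⟨hxcu.le, hxcv.le⟩ ⟨(hxcu.trans hx.1).le, h⟩ hx.1
      rwa [hGxc] at this
    · have := hGanti2 ⟨h, hx.2.le⟩ ⟨hv1.le, le_rfl⟩ hx.2
      rwa [hG1] at this
  -- translate to betaCDF'
  have hF : ∀ x, betaCDF' a₁ b₁ x - betaCDF' a₂ b₂ x = G x / (B₁ * B₂) := by
    intro x
    rw [betaCDF'_eq, betaCDF'_eq, ← hB₁_def, ← hB₂_def]
    simp only [hG_def]
    field_simp
  have hBB : 0 < B₁ * B₂ := mul_pos hB₁ hB₂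
  refine ⟨xc, ⟨hxc0, hxc1⟩, ?_, ?_, ?_⟩
  · intro x hx
    constructor
    · intro hEq
      have h0 : G x = 0 := by
        have h := hF x
        rw [hEq, sub_self] at h
        have := h.symm
        rwa [div_eq_zero_iff, or_iff_left (ne_of_gt hBB)] at this
      rcases lt_trichotomy x xc with h | h | h
      · exact absurd h0 (ne_of_lt (hGneg x ⟨hx.1, h⟩))
      · exact h
      · exact absurd h0 (ne_of_gt (hGpos x ⟨h, hx.2⟩))
    · rintro rfl
      have h := hF x
      rw [hGxc, zero_div, sub_eq_zero] at h
      exact h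
  · intro x hx
    have h := hF x
    have hg : G x / (B₁ * B₂) < 0 := div_neg_of_neg_of_pos (hGneg x hx) hBB
    linarith
  · intro x hx
    have h := hF x
    have hg : 0 < G x / (B₁ * B₂) := div_pos (hGpos x hx) hBB
    linarith


end AuxSingleCrossing

theorem FMV_single_crossing (M V₁ V₂ : ℝ) (hM : M ∈ Set.Ioo (0:ℝ) 1)
    (hV₁ : V₁ ∈ Set.Ioo (0:ℝ) (M - M ^ 2)) (hV₂ : V₂ ∈ Set.Ioo (0:ℝ) (M - M ^ 2))
    (hne : V₁ ≠ V₂) :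
    ∃ xc ∈ Set.Ioo (0:ℝ) 1,
      (∀ x ∈ Set.Ioo (0:ℝ) 1, (FMV M V₁ x = FMV M V₂ x ↔ x = xc)) ∧
      (V₁ < V₂ →
        (∀ x ∈ Set.Ioo 0 xc, FMV M V₁ x < FMV M V₂ x) ∧
        (∀ x ∈ Set.Ioo xc 1, FMV M V₂ x < FMV M V₁ x)) := by
  obtain ⟨hM0, hM1⟩ := hM
  have hMM : 0 < M - M ^ 2 := lt_trans hV₁.1 hV₁.2
  have main : ∀ V V' : ℝ, V ∈ Set.Ioo (0:ℝ) (M - M ^ 2) →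
      V' ∈ Set.Ioo (0:ℝ) (M - M ^ 2) → V < V' →
      ∃ xc ∈ Set.Ioo (0:ℝ) 1,
        (∀ x ∈ Set.Ioo (0:ℝ) 1, (FMV M V x = FMV M V' x ↔ x = xc)) ∧
        (∀ x ∈ Set.Ioo 0 xc, FMV M V x < FMV M V' x) ∧
        (∀ x ∈ Set.Ioo xc 1, FMV M V' x < FMV M V x) := by
    intro V V' hV hV' hlt
    have hord : ∀ c : ℝ, 0 < c →
        c * (M - M ^ 2 - V') / V' < c * (M - M ^ 2 - V) / V := by
      intro c hc
      rw [div_lt_div_iff₀ hV'.1 hV.1]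
      nlinarith [mul_pos (mul_pos hc hMM) (sub_pos.2 hlt)]
    have hpos : ∀ c : ℝ, 0 < c → ∀ W : ℝ, W ∈ Set.Ioo (0:ℝ) (M - M ^ 2) →
        0 < c * (M - M ^ 2 - W) / W := by
      intro c hc W hW
      exact div_pos (mul_pos hc (by linarith [hW.2])) hW.1
    have hFMV : ∀ W, FMV M W =
        betaCDF' (M * (M - M ^ 2 - W) / W) ((1 - M) * (M - M ^ 2 - W) / W) := by
      intro W; rfl
    rw [hFMV V, hFMV V']
    exact master (hpos M hM0 V' hV') (hpos (1 - M) (by linarith) V' hV')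
      (hord M hM0) (hord (1 - M) (by linarith))
  rcases hne.lt_or_gt with h | h
  · obtain ⟨xc, hmem, hiff, hneg, hpos⟩ := main V₁ V₂ hV₁ hV₂ h
    exact ⟨xc, hmem, hiff, fun _ => ⟨hneg, hpos⟩⟩
  · obtain ⟨xc, hmem, hiff, hneg, hpos⟩ := main V₂ V₁ hV₂ hV₁ h
    exact ⟨xc, hmem,
      fun x hx => ⟨fun he => (hiff x hx).1 he.symm, fun he => ((hiff x hx).2 he).symm⟩,
      fun hlt => absurd hlt (not_lt.2 h.le)⟩
end

section
/- Let M ∈ (0,1) and V₁, V₂ ∈ (0, M - M²). Then V₁ ≤ V₂ if and only if F_{M,V₂} ⪯_ssd F_{M,V₁}, i.e., ∫₀ˣ F_{M,V₁}(t)dt ≤ ∫₀ˣ F_{M,V₂}(t)dt for all x ∈ [0,1]; thus Beta distributions with a common mean are totally ordered by second-order stochastic dominance according to their variance. -/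
open MeasureTheory intervalIntegral

open Set



section ALL

noncomputable def bg (a b x : ℝ) : ℝ := x ^ (a-1) * (1-x) ^ (b-1)
noncomputable def bI (a b : ℝ) : ℝ := ∫ x in (0:ℝ)..1, bg a b x
noncomputable def bG (a b t : ℝ) : ℝ := ∫ x in (0:ℝ)..t, bg a b x

theorem bg_intable {a b : ℝ} (ha : 0 < a) (hb : 0 < b) :
    IntervalIntegrable (bg a b) volume 0 1 := by
  have h := Complex.betaIntegral_convergent (u := a) (v := b) (by simpa using ha) (by simpa using hb)
  rw [intervalIntegrable_iff_integrableOn_Ioc_of_le zero_le_one] at h ⊢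
  refine (h.re).congr ?_
  filter_upwards [ae_restrict_mem measurableSet_Ioc] with x hx
  have hx0 : (0:ℝ) ≤ x := le_of_lt hx.1
  have hx1 : (0:ℝ) ≤ 1 - x := by linarith [hx.2]
  have e1 : ((x:ℂ) ^ ((a:ℂ) - 1)) = ((x ^ (a-1) : ℝ) : ℂ) := by
    rw [Complex.ofReal_cpow hx0]; push_cast; ring_nf
  have e2 : ((1 - (x:ℂ)) ^ ((b:ℂ) - 1)) = (((1-x) ^ (b-1) : ℝ) : ℂ) := by
    rw [Complex.ofReal_cpow hx1]; push_cast; ring_nf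
  simp only [e1, e2, bg, ← Complex.ofReal_mul, Complex.ofReal_re]
  simpa using Complex.ofReal_re _


theorem bg_pos {a b x : ℝ} (hx : x ∈ Ioo (0:ℝ) 1) : 0 < bg a b x := by
  have := hx.1; have := hx.2
  exact mul_pos (Real.rpow_pos_of_pos hx.1 _) (Real.rpow_pos_of_pos (by linarith) _)

theorem bI_pos {a b : ℝ} (ha : 0 < a) (hb : 0 < b) : 0 < bI a b :=
  intervalIntegral.intervalIntegral_pos_of_pos_on (bg_intable ha hb) (fun x hx => bg_pos hx) one_pos

theorem bg_contAt {a b x : ℝ} (hx : x ∈ Ioo (0:ℝ) 1) : ContinuousAt (bg a b) x := by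
  have h1 : ContinuousAt (fun y : ℝ => y ^ (a-1)) x :=
    Real.continuousAt_rpow_const x _ (Or.inl (ne_of_gt hx.1))
  have h2 : ContinuousAt (fun y : ℝ => (1-y) ^ (b-1)) x := by
    have : ContinuousAt (fun y : ℝ => y ^ (b-1)) (1-x) :=
      Real.continuousAt_rpow_const _ _ (Or.inl (by have := hx.2; intro h; linarith [sub_eq_zero.mp h]))
    exact this.comp (by fun_prop)
  exact h1.mul h2

theorem bg_contOn (a b : ℝ) : ContinuousOn (bg a b) (Ioo 0 1) :=
  fun x hx => (bg_contAt hx).continuousWithinAt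

theorem bG_hasDeriv {a b x : ℝ} (ha : 0 < a) (hb : 0 < b) (hx : x ∈ Ioo (0:ℝ) 1) :
    HasDerivAt (bG a b) (bg a b x) x := by
  refine intervalIntegral.integral_hasDerivAt_right
    ((bg_intable ha hb).mono_set ?_)
    ((bg_contOn a b).stronglyMeasurableAtFilter isOpen_Ioo x hx) (bg_contAt hx)
  rw [uIcc_of_le (le_of_lt hx.1), uIcc_of_le zero_le_one]
  exact Icc_subset_Icc le_rfl (le_of_lt hx.2)

theorem bG_cont {a b : ℝ} (ha : 0 < a) (hb : 0 < b) : ContinuousOn (bG a b) (Icc 0 1) := by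
  have := continuousOn_primitive_interval (a := (0:ℝ)) (b := 1) (μ := volume) (f := bg a b) ?_
  · unfold bG; simpa [uIcc_of_le (zero_le_one (α := ℝ))] using this
  · rw [uIcc_of_le zero_le_one, integrableOn_Icc_iff_integrableOn_Ioc]
    exact (intervalIntegrable_iff_integrableOn_Ioc_of_le zero_le_one).mp (bg_intable ha hb)

/-- monotonicity helper -/
theorem mono_of {p q : ℝ} {f f' : ℝ → ℝ} (hc : ContinuousOn f (Icc p q))
    (hd : ∀ x ∈ Ioo p q, HasDerivAt f (f' x) x) (hs : ∀ x ∈ Ioo p q, 0 ≤ f' x) :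
    MonotoneOn f (Icc p q) := by
  refine monotoneOn_of_deriv_nonneg (convex_Icc p q) hc ?_ ?_
  · rw [interior_Icc]; exact fun x hx => ((hd x hx).differentiableAt).differentiableWithinAt
  · rw [interior_Icc]; intro x hx; rw [(hd x hx).deriv]; exact hs x hx

theorem anti_of {p q : ℝ} {f f' : ℝ → ℝ} (hc : ContinuousOn f (Icc p q))
    (hd : ∀ x ∈ Ioo p q, HasDerivAt f (f' x) x) (hs : ∀ x ∈ Ioo p q, f' x ≤ 0) :
    AntitoneOn f (Icc p q) := by
  refine antitoneOn_of_deriv_nonpos (convex_Icc p q) hc ?_ ?_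
  · rw [interior_Icc]; exact fun x hx => ((hd x hx).differentiableAt).differentiableWithinAt
  · rw [interior_Icc]; intro x hx; rw [(hd x hx).deriv]; exact hs x hx

theorem const_of {f : ℝ → ℝ} (hc : ContinuousOn f (Icc 0 1))
    (hd : ∀ x ∈ Ioo (0:ℝ) 1, HasDerivAt f 0 x) : f 1 = f 0 := by
  have h1 := mono_of hc hd (fun x _ => le_rfl) (left_mem_Icc.2 zero_le_one)
    (right_mem_Icc.2 zero_le_one) zero_le_one
  have h2 := anti_of hc hd (fun x _ => le_rfl) (left_mem_Icc.2 zero_le_one)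
    (right_mem_Icc.2 zero_le_one) zero_le_one
  linarith


theorem bg_succ_left {a b x : ℝ} : bg (a+1) b x = x ^ a * (1-x) ^ (b-1) := by
  simp [bg]
theorem bg_succ_right {a b x : ℝ} : bg a (b+1) x = x ^ (a-1) * (1-x) ^ b := by
  simp [bg]

theorem bI_add {a b : ℝ} (ha : 0 < a) (hb : 0 < b) :
    bI a b = bI (a+1) b + bI a (b+1) := by
  have h1 : bI (a+1) b + bI a (b+1) = ∫ x in (0:ℝ)..1, (bg (a+1) b x + bg a (b+1) x) :=
    (intervalIntegral.integral_add (bg_intable (by linarith) hb) (bg_intable ha (by linarith))).symm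
  rw [h1, bI, intervalIntegral.integral_of_le zero_le_one,
    intervalIntegral.integral_of_le zero_le_one]
  refine setIntegral_congr_fun measurableSet_Ioc (fun x hx => ?_)
  rcases eq_or_lt_of_le hx.2 with h1 | h1
  · subst h1
    simp [bg, bg_succ_left, bg_succ_right, Real.zero_rpow (ne_of_gt hb)]
  · have hx0 : x ≠ 0 := ne_of_gt hx.1
    have hx1 : (1:ℝ) - x ≠ 0 := by intro h; linarith [sub_eq_zero.mp h]
    rw [bg, bg_succ_left, bg_succ_right]
    have e1 : x ^ a = x ^ (a-1) * x := by
      rw [← Real.rpow_add_one hx0]; ring_nf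
    have e2 : (1-x) ^ b = (1-x) ^ (b-1) * (1-x) := by
      rw [← Real.rpow_add_one hx1]; ring_nf
    rw [e1, e2]; ring

theorem bI_ratio {a b : ℝ} (ha : 0 < a) (hb : 0 < b) :
    a * bI a (b+1) = b * bI (a+1) b := by
  set R : ℝ → ℝ := fun t => t ^ a * (1-t) ^ b - a * bG a (b+1) t + b * bG (a+1) b t with hR
  have hcont : ContinuousOn R (Icc 0 1) := by
    refine ContinuousOn.add (ContinuousOn.sub (ContinuousOn.mul ?_ ?_) ?_) ?_
    · exact fun x _ => (Real.continuousAt_rpow_const x a (Or.inr ha.le)).continuousWithinAt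
    · refine fun x _ => ContinuousWithinAt.comp (t := univ)
        (Real.continuousAt_rpow_const (1-x) b (Or.inr hb.le)).continuousWithinAt
        ((continuous_const.sub continuous_id).continuousWithinAt) (fun _ _ => trivial)
    · exact (bG_cont ha (by linarith)).const_smul a
    · exact (bG_cont (by linarith) hb).const_smul b
  have hderiv : ∀ x ∈ Ioo (0:ℝ) 1, HasDerivAt R 0 x := by
    intro x hx
    have hx0 : x ≠ 0 := ne_of_gt hx.1
    have hx1 : (1:ℝ) - x ≠ 0 := by intro h; linarith [sub_eq_zero.mp h, hx.2]
    have d1 : HasDerivAt (fun t : ℝ => t ^ a) (a * x ^ (a-1)) x := by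
      simpa [mul_comm] using Real.hasDerivAt_rpow_const (p := a) (Or.inl hx0)
    have d2 : HasDerivAt (fun t : ℝ => (1-t) ^ b) (-(b * (1-x) ^ (b-1))) x := by
      have := (Real.hasDerivAt_rpow_const (x := 1-x) (p := b) (Or.inl hx1)).comp x
        ((hasDerivAt_id x).const_sub 1)
      exact this.congr_deriv (by simp [mul_comm])
    have dmul := d1.mul d2
    have d3 := bG_hasDeriv ha (by linarith : (0:ℝ) < b + 1) hx
    have d4 := bG_hasDeriv (by linarith : (0:ℝ) < a + 1) hb hx
    have := (dmul.sub ((d3.const_mul a))).add ((d4.const_mul b))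
    refine this.congr_deriv ?_
    rw [bg_succ_left, bg_succ_right]
    have e1 : x ^ a = x ^ (a-1) * x := by rw [← Real.rpow_add_one hx0]; ring_nf
    have e2 : (1-x) ^ b = (1-x) ^ (b-1) * (1-x) := by rw [← Real.rpow_add_one hx1]; ring_nf
    rw [e1, e2]; ring
  have h := const_of hcont hderiv
  have hR1 : R 1 = -(a * bI a (b+1)) + b * bI (a+1) b := by
    simp [hR, Real.zero_rpow (ne_of_gt hb), bG, bI]
  have hR0 : R 0 = 0 := by
    simp [hR, bG, Real.zero_rpow (ne_of_gt ha)]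
  rw [hR1, hR0] at h
  linarith

theorem bI_rec_left {a b : ℝ} (ha : 0 < a) (hb : 0 < b) :
    bI (a+1) b = a / (a+b) * bI a b := by
  have h1 := bI_ratio ha hb
  have h2 := bI_add ha hb
  have hab : a + b ≠ 0 := by positivity
  field_simp
  nlinarith [h1, h2]

theorem bI_rec_right {a b : ℝ} (ha : 0 < a) (hb : 0 < b) :
    bI a (b+1) = b / (a+b) * bI a b := by
  have h1 := bI_ratio ha hb
  have h2 := bI_add ha hb
  have hab : a + b ≠ 0 := by positivity
  field_simp
  nlinarith [h1, h2]



theorem prim_cont {g : ℝ → ℝ} (hg : IntervalIntegrable g volume 0 1) :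
    ContinuousOn (fun t => ∫ x in (0:ℝ)..t, g x) (Icc 0 1) := by
  have := continuousOn_primitive_interval (a := (0:ℝ)) (b := 1) (μ := volume) (f := g) ?_
  · simpa [uIcc_of_le (zero_le_one (α := ℝ))] using this
  · rw [uIcc_of_le zero_le_one, integrableOn_Icc_iff_integrableOn_Ioc]
    exact (intervalIntegrable_iff_integrableOn_Ioc_of_le zero_le_one).mp hg

theorem prim_deriv {g : ℝ → ℝ} (hg : IntervalIntegrable g volume 0 1)
    (hgc : ContinuousOn g (Ioo 0 1)) {x : ℝ} (hx : x ∈ Ioo (0:ℝ) 1) :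
    HasDerivAt (fun t => ∫ x in (0:ℝ)..t, g x) (g x) x := by
  refine intervalIntegral.integral_hasDerivAt_right (hg.mono_set ?_)
    (hgc.stronglyMeasurableAtFilter isOpen_Ioo x hx) ((hgc.continuousAt (Ioo_mem_nhds hx.1 hx.2)))
  rw [uIcc_of_le (le_of_lt hx.1), uIcc_of_le zero_le_one]
  exact Icc_subset_Icc le_rfl (le_of_lt hx.2)

theorem parts_one {φ g : ℝ → ℝ} (hφc : ContinuousOn φ (Icc 0 1)) (hφ0 : φ 0 = 0)
    (hgi : IntervalIntegrable g volume 0 1) (hgc : ContinuousOn g (Ioo 0 1))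
    (hd : ∀ x ∈ Ioo (0:ℝ) 1, HasDerivAt φ (g x) x) :
    ∫ t in (0:ℝ)..1, φ t = ∫ x in (0:ℝ)..1, (1-x) * g x := by
  have hgi' : IntervalIntegrable (fun x => (1-x) * g x) volume 0 1 :=
    hgi.continuousOn_mul (by fun_prop)
  have hgc' : ContinuousOn (fun x => (1-x) * g x) (Ioo 0 1) :=
    ContinuousOn.mul (by fun_prop) hgc
  have hφi : IntervalIntegrable φ volume 0 1 := hφc.intervalIntegrable_of_Icc zero_le_one
  set Q : ℝ → ℝ := fun t => (∫ x in (0:ℝ)..t, φ x) - (t-1) * φ t - ∫ x in (0:ℝ)..t, (1-x) * g x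
    with hQ
  have hQc : ContinuousOn Q (Icc 0 1) :=
    ((prim_cont hφi).sub (ContinuousOn.mul (by fun_prop) hφc)).sub (prim_cont hgi')
  have hQd : ∀ x ∈ Ioo (0:ℝ) 1, HasDerivAt Q 0 x := by
    intro x hx
    have d1 := prim_deriv hφi (fun y hy => ((hd y hy).continuousAt).continuousWithinAt) hx
    have d2 : HasDerivAt (fun t : ℝ => (t-1) * φ t) (φ x + (x-1) * g x) x := by
      have := ((hasDerivAt_id x).sub_const 1).mul (hd x hx)
      exact this.congr_deriv (by simp)
    have d3 := prim_deriv hgi' hgc' hx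
    have := (d1.sub d2).sub d3
    refine this.congr_deriv ?_; ring
  have h := const_of hQc hQd
  have hQ0 : Q 0 = 0 := by simp [hQ, hφ0]
  have hQ1 : Q 1 = (∫ t in (0:ℝ)..1, φ t) - ∫ x in (0:ℝ)..1, (1-x) * g x := by
    simp [hQ]
  rw [hQ0, hQ1] at h
  linarith

theorem parts_two {φ g : ℝ → ℝ} (hφc : ContinuousOn φ (Icc 0 1)) (hφ0 : φ 0 = 0)
    (hgi : IntervalIntegrable g volume 0 1) (hgc : ContinuousOn g (Ioo 0 1))
    (hd : ∀ x ∈ Ioo (0:ℝ) 1, HasDerivAt φ (g x) x) :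
    ∫ x in (0:ℝ)..1, (1-x) * φ x = ∫ x in (0:ℝ)..1, ((1-x)^2/2) * g x := by
  have hgi' : IntervalIntegrable (fun x => ((1-x)^2/2) * g x) volume 0 1 :=
    hgi.continuousOn_mul (by fun_prop)
  have hgc' : ContinuousOn (fun x => ((1-x)^2/2) * g x) (Ioo 0 1) :=
    ContinuousOn.mul (by fun_prop) hgc
  have hφi : IntervalIntegrable (fun x => (1-x) * φ x) volume 0 1 :=
    (hφc.intervalIntegrable_of_Icc zero_le_one).continuousOn_mul (by fun_prop)
  set Q : ℝ → ℝ := fun t =>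
      (∫ x in (0:ℝ)..t, (1-x) * φ x) + ((1-t)^2/2) * φ t - ∫ x in (0:ℝ)..t, ((1-x)^2/2) * g x
    with hQ
  have hQc : ContinuousOn Q (Icc 0 1) :=
    ((prim_cont hφi).add (ContinuousOn.mul (by fun_prop) hφc)).sub (prim_cont hgi')
  have hQd : ∀ x ∈ Ioo (0:ℝ) 1, HasDerivAt Q 0 x := by
    intro x hx
    have d1 := prim_deriv hφi (ContinuousOn.mul (by fun_prop)
      (fun y hy => ((hd y hy).continuousAt).continuousWithinAt)) hx
    have d2 : HasDerivAt (fun t : ℝ => ((1-t)^2/2) * φ t)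
        (-(1-x) * φ x + ((1-x)^2/2) * g x) x := by
      have dp : HasDerivAt (fun t : ℝ => (1-t)^2/2) (-(1-x)) x := by
        have := (((hasDerivAt_id x).const_sub 1).pow 2).div_const 2
        simp only [id_eq] at this
        refine this.congr_deriv ?_; push_cast; ring
      exact (dp.mul (hd x hx)).congr_deriv (by ring)
    have d3 := prim_deriv hgi' hgc' hx
    have := (d1.add d2).sub d3
    refine this.congr_deriv ?_; ring
  have h := const_of hQc hQd
  have hQ0 : Q 0 = 0 := by simp [hQ, hφ0]
  have hQ1 : Q 1 = (∫ x in (0:ℝ)..1, (1-x) * φ x) - ∫ x in (0:ℝ)..1, ((1-x)^2/2) * g x := by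
    simp [hQ]
  rw [hQ0, hQ1] at h
  linarith



theorem crossing {h h' : ℝ → ℝ} (hc : ContinuousOn h (Icc 0 1)) (h0 : h 0 = 0) (h1 : h 1 = 0)
    (hd : ∀ x ∈ Ioo (0:ℝ) 1, HasDerivAt h (h' x) x)
    (hconv : Convex ℝ {x | x ∈ Ioo (0:ℝ) 1 ∧ h' x < 0}) :
    ∃ w ∈ Icc (0:ℝ) 1, (∀ x ∈ Icc (0:ℝ) w, 0 ≤ h x) ∧ (∀ x ∈ Icc w 1, h x ≤ 0) := by
  set N := {x | x ∈ Ioo (0:ℝ) 1 ∧ h' x < 0} with hN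
  have hNsub : N ⊆ Ioo 0 1 := fun x hx => hx.1
  rcases eq_empty_or_nonempty N with hemp | hne
  · -- h' ≥ 0 everywhere, h monotone, so h ≡ 0
    have hm : MonotoneOn h (Icc 0 1) := by
      refine mono_of hc hd (fun x hx => ?_)
      by_contra hlt
      exact (eq_empty_iff_forall_notMem.mp hemp x) ⟨hx, lt_of_not_ge hlt⟩
    refine ⟨1, right_mem_Icc.2 zero_le_one, fun x hx => ?_, fun x hx => ?_⟩
    · have := hm (left_mem_Icc.2 zero_le_one) hx hx.1
      rwa [h0] at this
    · have hx1 : x = 1 := le_antisymm hx.2 hx.1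
      simp [hx1, h1]
  · have hbdd : BddAbove N := ⟨1, fun x hx => (hNsub hx).2.le⟩
    have hbddb : BddBelow N := ⟨0, fun x hx => (hNsub hx).1.le⟩
    set u := sInf N with hu
    set v := sSup N with hv
    have hu0 : 0 ≤ u := le_csInf hne (fun x hx => (hNsub hx).1.le)
    have hv1 : v ≤ 1 := csSup_le hne (fun x hx => (hNsub hx).2.le)
    have huv : u ≤ v := csInf_le_csSup hne hbddb hbdd
    have hIoo_sub : ∀ x, x ∈ Ioo u v → x ∈ N := by
      intro x hx
      obtain ⟨n, hn, hnx⟩ := exists_lt_of_csInf_lt hne hx.1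
      obtain ⟨m, hm, hxm⟩ := exists_lt_of_lt_csSup hne hx.2
      exact hconv.ordConnected.out hn hm ⟨hnx.le, hxm.le⟩
    -- monotone on [0,u]
    have mono1 : MonotoneOn h (Icc 0 u) := by
      refine mono_of (hc.mono (Icc_subset_Icc le_rfl (huv.trans hv1))) (fun x hx => hd x ?_)
        (fun x hx => ?_)
      · exact ⟨hx.1, lt_of_lt_of_le hx.2 (huv.trans hv1)⟩
      · by_contra hlt
        exact absurd (csInf_le hbddb (⟨⟨hx.1, lt_of_lt_of_le hx.2 (huv.trans hv1)⟩,
          lt_of_not_ge hlt⟩ : x ∈ N)) (not_le.2 hx.2)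
    have mono2 : MonotoneOn h (Icc v 1) := by
      refine mono_of (hc.mono (Icc_subset_Icc (hu0.trans huv) le_rfl)) (fun x hx => hd x ?_)
        (fun x hx => ?_)
      · exact ⟨lt_of_le_of_lt (hu0.trans huv) hx.1, hx.2⟩
      · by_contra hlt
        exact absurd (le_csSup hbdd (⟨⟨lt_of_le_of_lt (hu0.trans huv) hx.1, hx.2⟩,
          lt_of_not_ge hlt⟩ : x ∈ N)) (not_le.2 hx.1)
    have anti1 : AntitoneOn h (Icc u v) := by
      refine anti_of (hc.mono (Icc_subset_Icc hu0 hv1)) (fun x hx => hd x (hNsub (hIoo_sub x hx)))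
        (fun x hx => (hIoo_sub x hx).2.le)
    have hnn_left : ∀ x ∈ Icc (0:ℝ) u, 0 ≤ h x := by
      intro x hx
      have := mono1 (left_mem_Icc.2 hu0) hx hx.1
      rwa [h0] at this
    have hnp_right : ∀ x ∈ Icc v 1, h x ≤ 0 := by
      intro x hx
      have := mono2 hx (right_mem_Icc.2 hv1) hx.2
      rwa [h1] at this
    set K := {x | x ∈ Icc u v ∧ 0 ≤ h x} with hK
    have hKne : K.Nonempty := ⟨u, ⟨left_mem_Icc.2 huv, hnn_left u ⟨hu0, le_rfl⟩⟩⟩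
    have hKbdd : BddAbove K := ⟨v, fun x hx => hx.1.2⟩
    have hKclosed : IsClosed K := by
      have : K = Icc u v ∩ h ⁻¹' (Ici 0) := by
        ext x; simp only [hK, mem_setOf_eq, mem_inter_iff, mem_preimage, mem_Ici]
      rw [this]
      exact ContinuousOn.preimage_isClosed_of_isClosed
        (hc.mono (Icc_subset_Icc hu0 hv1)) isClosed_Icc isClosed_Ici
    set w := sSup K with hw
    have hwK : w ∈ K := hKclosed.csSup_mem hKne hKbdd
    have hwuv : w ∈ Icc u v := hwK.1
    have hwnn : 0 ≤ h w := hwK.2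
    -- h ≤ 0 on (w, v]
    have hneg : ∀ x, w < x → x ≤ v → h x ≤ 0 := by
      intro x hwx hxv
      by_contra hpos
      have : x ∈ K := ⟨⟨hwuv.1.trans hwx.le, hxv⟩, (lt_of_not_ge hpos).le⟩
      exact absurd (le_csSup hKbdd this) (not_le.2 hwx)
    -- h w ≤ 0 if w < v, via continuity
    have hwle : w < v → h w ≤ 0 := by
      intro hwv
      have hne2 : Filter.NeBot (nhdsWithin w (Ioo w v)) := by
        rw [← mem_closure_iff_nhdsWithin_neBot, closure_Ioo (ne_of_lt hwv)]
        exact ⟨le_rfl, hwv.le⟩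
      have hcw : ContinuousWithinAt h (Ioo w v) w := by
        refine (hc.continuousWithinAt ⟨hu0.trans hwuv.1, hwuv.2.trans hv1⟩).mono ?_
        exact fun y hy => ⟨(hu0.trans hwuv.1).trans hy.1.le, hy.2.le.trans hv1⟩
      refine le_of_tendsto hcw ?_
      filter_upwards [self_mem_nhdsWithin] with y hy
      exact hneg y hy.1 hy.2.le
    refine ⟨w, ⟨hu0.trans hwuv.1, hwuv.2.trans hv1⟩, fun x hx => ?_, fun x hx => ?_⟩
    · rcases le_or_gt x u with hxu | hux
      · exact hnn_left x ⟨hx.1, hxu⟩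
      · exact le_trans hwnn (anti1 ⟨hux.le, hx.2.trans hwuv.2⟩ hwuv hx.2)
    · rcases le_or_gt v x with hvx | hxv
      · exact hnp_right x ⟨hvx, hx.2⟩
      · rcases eq_or_lt_of_le hx.1 with heq | hlt
        · exact heq ▸ hwle (lt_of_le_of_lt (heq ▸ hx.1) hxv)
        · exact hneg x hlt hxv.le


-- convexity of ψ x = K + p * log x + q * log (1-x) on Ioo 0 1, for p, q ≤ 0
theorem psi_convex {K p q : ℝ} (hp : p ≤ 0) (hq : q ≤ 0) :
    ConvexOn ℝ (Ioo (0:ℝ) 1) (fun x => K + p * Real.log x + q * Real.log (1-x)) := by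
  have h1 : ConvexOn ℝ (Ioo (0:ℝ) 1) (fun x => p * Real.log x) := by
    have := (strictConcaveOn_log_Ioi.concaveOn.neg).smul (c := -p) (by linarith)
    have h2 := this.subset (s := Ioo (0:ℝ) 1) (fun x hx => hx.1) (convex_Ioo 0 1)
    refine h2.congr (fun x _ => ?_)
    simp only [Pi.neg_apply, smul_eq_mul]; ring
  have h2 : ConvexOn ℝ (Ioo (0:ℝ) 1) (fun x => q * Real.log (1-x)) := by
    have hconc : ConcaveOn ℝ (Iio (1:ℝ)) (fun x => Real.log (1-x)) := by
      have hA : ConcaveOn ℝ (Ioi (0:ℝ)) Real.log := strictConcaveOn_log_Ioi.concaveOn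
      constructor
      · exact convex_Iio 1
      · intro x hx y hy α β hα hβ hαβ
        have hx' : (0:ℝ) < 1 - x := by simpa using hx
        have hy' : (0:ℝ) < 1 - y := by simpa using hy
        have := hA.2 (mem_Ioi.2 hx') (mem_Ioi.2 hy') hα hβ hαβ
        simp only [smul_eq_mul] at this ⊢
        have he : 1 - (α * x + β * y) = α * (1-x) + β * (1-y) := by nlinarith [hαβ]
        rw [he]
        exact this
    have := (hconc.neg).smul (c := -q) (by linarith)
    have h3 := this.subset (s := Ioo (0:ℝ) 1) (fun x hx => hx.2) (convex_Ioo 0 1)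
    refine h3.congr (fun x _ => ?_)
    simp only [Pi.neg_apply, smul_eq_mul]; ring
  have := (h1.add h2).add_const K
  refine this.congr (fun x _ => ?_)
  simp only [Pi.add_apply]; ring

end ALL

noncomputable def bF (a b t : ℝ) : ℝ := bG a b t / bI a b

theorem bF_cont {a b : ℝ} (ha : 0 < a) (hb : 0 < b) : ContinuousOn (bF a b) (Icc 0 1) :=
  (bG_cont ha hb).div_const _

theorem bF_zero (a b : ℝ) : bF a b 0 = 0 := by simp [bF, bG]

theorem bF_one {a b : ℝ} (ha : 0 < a) (hb : 0 < b) : bF a b 1 = 1 := by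
  have : bG a b 1 = bI a b := rfl
  rw [bF, this, div_self (ne_of_gt (bI_pos ha hb))]

theorem bF_deriv {a b x : ℝ} (ha : 0 < a) (hb : 0 < b) (hx : x ∈ Ioo (0:ℝ) 1) :
    HasDerivAt (bF a b) (bg a b x / bI a b) x :=
  (bG_hasDeriv ha hb hx).div_const _

theorem weight_congr {a b : ℝ} (ha : 0 < a) (hb : 0 < b) :
    ∫ x in (0:ℝ)..1, (1-x) * bg a b x = bI a (b+1) := by
  rw [bI, intervalIntegral.integral_of_le zero_le_one, intervalIntegral.integral_of_le zero_le_one]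
  refine setIntegral_congr_fun measurableSet_Ioc (fun x hx => ?_)
  rcases eq_or_lt_of_le hx.2 with h1 | h1
  · subst h1
    simp [bg, bg_succ_right, Real.zero_rpow (ne_of_gt hb)]
  · have hx1 : (1:ℝ) - x ≠ 0 := by intro h; linarith [sub_eq_zero.mp h]
    rw [bg_succ_right, bg]
    have e2 : (1-x) ^ b = (1-x) ^ (b-1) * (1-x) := by
      rw [← Real.rpow_add_one hx1]; ring_nf
    rw [e2]; ring

theorem weight2_congr {a b : ℝ} (ha : 0 < a) (hb : 0 < b) :
    ∫ x in (0:ℝ)..1, ((1-x)^2/2) * bg a b x = bI a (b+2) / 2 := by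
  have : bI a (b+2) / 2 = ∫ x in (0:ℝ)..1, bg a (b+2) x / 2 := by
    rw [bI, intervalIntegral.integral_div]
  rw [this, intervalIntegral.integral_of_le zero_le_one,
    intervalIntegral.integral_of_le zero_le_one]
  refine setIntegral_congr_fun measurableSet_Ioc (fun x hx => ?_)
  rcases eq_or_lt_of_le hx.2 with h1 | h1
  · subst h1
    simp [bg, Real.zero_rpow (by linarith : b + 2 - 1 ≠ 0)]
  · have hxpos : (0:ℝ) < 1 - x := by linarith [hx.2]
    have hx1 : (1:ℝ) - x ≠ 0 := ne_of_gt hxpos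
    rw [bg, bg]
    have e2 : (1-x) ^ (b+2-1) = (1-x) ^ (b-1) * (1-x)^(2:ℕ) := by
      rw [← Real.rpow_natCast (1-x) 2, ← Real.rpow_add hxpos]
      ring_nf
    rw [e2]; ring

theorem mean_int {a b : ℝ} (ha : 0 < a) (hb : 0 < b) :
    ∫ t in (0:ℝ)..1, bG a b t = b/(a+b) * bI a b := by
  rw [parts_one (bG_cont ha hb) (by simp [bG]) (bg_intable ha hb) (bg_contOn a b)
    (fun x hx => bG_hasDeriv ha hb hx), weight_congr ha hb, bI_rec_right ha hb]

theorem second_int {a b : ℝ} (ha : 0 < a) (hb : 0 < b) :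
    ∫ t in (0:ℝ)..1, (∫ x in (0:ℝ)..t, bG a b x) =
      (b*(b+1))/(2*(a+b)*(a+b+1)) * bI a b := by
  have hGi : IntervalIntegrable (bG a b) volume 0 1 :=
    (bG_cont ha hb).intervalIntegrable_of_Icc zero_le_one
  have step1 := parts_one (φ := fun t => ∫ x in (0:ℝ)..t, bG a b x) (g := bG a b)
    (prim_cont hGi) (by simp) hGi ((bG_cont ha hb).mono Ioo_subset_Icc_self)
    (fun x hx => prim_deriv hGi ((bG_cont ha hb).mono Ioo_subset_Icc_self) hx)
  have step2 := parts_two (φ := bG a b) (g := bg a b) (bG_cont ha hb) (by simp [bG])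
    (bg_intable ha hb) (bg_contOn a b) (fun x hx => bG_hasDeriv ha hb hx)
  rw [step1, step2, weight2_congr ha hb]
  have e : b + 2 = (b+1) + 1 := by ring
  rw [e, bI_rec_right ha (by linarith), bI_rec_right ha hb]
  field_simp
  ring

theorem sign_eq {a₁ b₁ a₂ b₂ : ℝ} (ha₁ : 0 < a₁) (hb₁ : 0 < b₁) (ha₂ : 0 < a₂) (hb₂ : 0 < b₂)
    {x : ℝ} (hx : x ∈ Ioo (0:ℝ) 1) :
    (bg a₂ b₂ x / bI a₂ b₂ - bg a₁ b₁ x / bI a₁ b₁ < 0 ↔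
      (Real.log (bI a₁ b₁) - Real.log (bI a₂ b₂)) + (a₂-a₁) * Real.log x
        + (b₂-b₁) * Real.log (1-x) < 0) := by
  have hI₁ := bI_pos ha₁ hb₁
  have hI₂ := bI_pos ha₂ hb₂
  have hf₁ : 0 < bg a₁ b₁ x / bI a₁ b₁ := div_pos (bg_pos hx) hI₁
  have hf₂ : 0 < bg a₂ b₂ x / bI a₂ b₂ := div_pos (bg_pos hx) hI₂
  have hxpos := hx.1
  have h1xpos : (0:ℝ) < 1 - x := by linarith [hx.2]
  rw [sub_neg, ← Real.log_lt_log_iff hf₂ hf₁]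
  have hlog : ∀ a b : ℝ, 0 < bI a b → Real.log (bg a b x / bI a b) =
      (a-1) * Real.log x + (b-1) * Real.log (1-x) - Real.log (bI a b) := by
    intro a b hI
    rw [bg, Real.log_div (ne_of_gt (mul_pos (Real.rpow_pos_of_pos hxpos _)
        (Real.rpow_pos_of_pos h1xpos _))) (ne_of_gt hI),
      Real.log_mul (ne_of_gt (Real.rpow_pos_of_pos hxpos _))
        (ne_of_gt (Real.rpow_pos_of_pos h1xpos _)),
      Real.log_rpow hxpos, Real.log_rpow h1xpos]
  rw [hlog _ _ hI₂, hlog _ _ hI₁]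
  constructor <;> intro h <;> nlinarith [h]

theorem mean_val {M V : ℝ} (hM : M ∈ Ioo (0:ℝ) 1) (hV : V ∈ Ioo (0:ℝ) (M - M^2)) :
    ((1-M) * (M - M^2 - V) / V) / ((M * (M - M^2 - V) / V) + ((1-M) * (M - M^2 - V) / V))
      = 1 - M := by
  have hV0 : V ≠ 0 := ne_of_gt hV.1
  have hs : 0 < M - M^2 - V := by have := hV.2; linarith
  have hs' : M - M^2 - V ≠ 0 := ne_of_gt hs
  rw [← add_div]
  have he : M * (M - M^2 - V) + (1-M) * (M - M^2 - V) = M - M^2 - V := by ring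
  rw [he, div_eq_iff (div_ne_zero hs' hV0), mul_div_assoc]

theorem second_val {M V : ℝ} (hM : M ∈ Ioo (0:ℝ) 1) (hV : V ∈ Ioo (0:ℝ) (M - M^2)) :
    (((1-M) * (M - M^2 - V) / V) * (((1-M) * (M - M^2 - V) / V)+1)) /
      (2*((M * (M - M^2 - V) / V) + ((1-M) * (M - M^2 - V) / V))
        *(((M * (M - M^2 - V) / V) + ((1-M) * (M - M^2 - V) / V))+1))
      = ((1-M)^2 + V) / 2 := by
  have hV0 : (0:ℝ) < V := hV.1
  have hV0' : V ≠ 0 := ne_of_gt hV0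
  have hs : 0 < M - M^2 - V := by have := hV.2; linarith
  have hMp := hM.1
  have hM1 : 0 < 1 - M := by have := hM.2; linarith
  have hs' : M - M^2 - V ≠ 0 := ne_of_gt hs
  have hMM : (0:ℝ) < M - M^2 := by linarith
  have hMM' : M - M^2 ≠ 0 := ne_of_gt hMM
  have hs2 : M + (-M^2 - V) ≠ 0 := by intro h; exact hs' (by linarith)
  have hs3 : M - M^2 ≠ 0 := hMM'
  have hs4 : M + -M^2 ≠ 0 := by intro h; exact hMM' (by linarith)
  have hc : (M * (M - M^2 - V) / V) + ((1-M) * (M - M^2 - V) / V) = (M - M^2 - V)/V := by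
    field_simp; ring
  rw [hc]
  have hc1 : (M - M^2 - V)/V + 1 = (M - M^2)/V := by field_simp; ring
  rw [hc1]
  rw [div_eq_div_iff (by positivity) (by norm_num)]
  field_simp
  ring


theorem FMV_eq_bF (M V : ℝ) :
    FMV M V = bF (M * (M - M ^ 2 - V) / V) ((1 - M) * (M - M ^ 2 - V) / V) := rfl

theorem FMV_ssd_iff_variance (M V₁ V₂ : ℝ) (hM : M ∈ Set.Ioo (0:ℝ) 1)
    (hV₁ : V₁ ∈ Set.Ioo (0:ℝ) (M - M ^ 2)) (hV₂ : V₂ ∈ Set.Ioo (0:ℝ) (M - M ^ 2)) :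
    V₁ ≤ V₂ ↔
      ∀ x ∈ Set.Icc (0:ℝ) 1,
        (∫ t in (0:ℝ)..x, FMV M V₁ t) ≤ ∫ t in (0:ℝ)..x, FMV M V₂ t := by
  obtain ⟨hM0, hM1⟩ := hM
  have hM1' : (0:ℝ) < 1 - M := by linarith
  set a₁ := M * (M - M ^ 2 - V₁) / V₁ with ha₁def
  set b₁ := (1 - M) * (M - M ^ 2 - V₁) / V₁ with hb₁def
  set a₂ := M * (M - M ^ 2 - V₂) / V₂ with ha₂def
  set b₂ := (1 - M) * (M - M ^ 2 - V₂) / V₂ with hb₂def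
  have hs₁ : 0 < M - M^2 - V₁ := by have := hV₁.2; linarith
  have hs₂ : 0 < M - M^2 - V₂ := by have := hV₂.2; linarith
  have ha₁ : 0 < a₁ := div_pos (mul_pos hM0 hs₁) hV₁.1
  have hb₁ : 0 < b₁ := div_pos (mul_pos hM1' hs₁) hV₁.1
  have ha₂ : 0 < a₂ := div_pos (mul_pos hM0 hs₂) hV₂.1
  have hb₂ : 0 < b₂ := div_pos (mul_pos hM1' hs₂) hV₂.1
  have hF₁ : FMV M V₁ = bF a₁ b₁ := FMV_eq_bF M V₁
  have hF₂ : FMV M V₂ = bF a₂ b₂ := FMV_eq_bF M V₂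
  -- mean values
  have hmean₁ : ∫ t in (0:ℝ)..1, bF a₁ b₁ t = 1 - M := by
    simp only [bF, intervalIntegral.integral_div]
    rw [mean_int ha₁ hb₁, mul_div_assoc, div_self (ne_of_gt (bI_pos ha₁ hb₁)), mul_one]
    exact mean_val ⟨hM0, hM1⟩ hV₁
  have hmean₂ : ∫ t in (0:ℝ)..1, bF a₂ b₂ t = 1 - M := by
    simp only [bF, intervalIntegral.integral_div]
    rw [mean_int ha₂ hb₂, mul_div_assoc, div_self (ne_of_gt (bI_pos ha₂ hb₂)), mul_one]
    exact mean_val ⟨hM0, hM1⟩ hV₂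
  constructor
  · -- forward direction
    intro hVle x hx
    have hp : a₂ - a₁ ≤ 0 := by
      have hMM : (0:ℝ) < M - M^2 := lt_trans hV₁.1 hV₁.2
      rw [ha₁def, ha₂def, sub_nonpos, div_le_div_iff₀ hV₂.1 hV₁.1]
      nlinarith [mul_nonneg (mul_nonneg hM0.le hMM.le) (sub_nonneg.2 hVle)]
    have hq : b₂ - b₁ ≤ 0 := by
      have hMM : (0:ℝ) < M - M^2 := lt_trans hV₁.1 hV₁.2
      rw [hb₁def, hb₂def, sub_nonpos, div_le_div_iff₀ hV₂.1 hV₁.1]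
      nlinarith [mul_nonneg (mul_nonneg hM1'.le hMM.le) (sub_nonneg.2 hVle)]
    set h : ℝ → ℝ := fun t => bF a₂ b₂ t - bF a₁ b₁ t with hhdef
    set h' : ℝ → ℝ := fun y => bg a₂ b₂ y / bI a₂ b₂ - bg a₁ b₁ y / bI a₁ b₁ with hh'def
    have hc : ContinuousOn h (Icc 0 1) := (bF_cont ha₂ hb₂).sub (bF_cont ha₁ hb₁)
    have h0 : h 0 = 0 := by simp [hhdef, bF_zero]
    have h1 : h 1 = 0 := by simp [hhdef, bF_one ha₂ hb₂, bF_one ha₁ hb₁]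
    have hd : ∀ y ∈ Ioo (0:ℝ) 1, HasDerivAt h (h' y) y :=
      fun y hy => (bF_deriv ha₂ hb₂ hy).sub (bF_deriv ha₁ hb₁ hy)
    have hconv : Convex ℝ {y | y ∈ Ioo (0:ℝ) 1 ∧ h' y < 0} := by
      have hpsi := psi_convex (K := Real.log (bI a₁ b₁) - Real.log (bI a₂ b₂))
        (p := a₂ - a₁) (q := b₂ - b₁) hp hq
      have hcv := hpsi.convex_lt 0
      refine (congrArg (Convex ℝ) ?_).mpr hcv
      ext y
      exact and_congr_right fun hy => sign_eq ha₁ hb₁ ha₂ hb₂ hy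
    obtain ⟨w, hw, hA, hB⟩ := crossing hc h0 h1 hd hconv
    set D : ℝ → ℝ := fun x => ∫ t in (0:ℝ)..x, h t with hDdef
    have hinth : IntervalIntegrable h volume 0 1 := hc.intervalIntegrable_of_Icc zero_le_one
    have hDc : ContinuousOn D (Icc 0 1) := prim_cont hinth
    have hDd : ∀ y ∈ Ioo (0:ℝ) 1, HasDerivAt D (h y) y :=
      fun y hy => prim_deriv hinth (hc.mono Ioo_subset_Icc_self) hy
    have hD0 : D 0 = 0 := by simp [hDdef]
    have hD1 : D 1 = 0 := by
      have := intervalIntegral.integral_sub (μ := volume)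
        ((bF_cont ha₂ hb₂).intervalIntegrable_of_Icc zero_le_one)
        ((bF_cont ha₁ hb₁).intervalIntegrable_of_Icc zero_le_one)
      rw [hDdef]
      simp only [hhdef]
      rw [this, hmean₁, hmean₂, sub_self]
    have hDmono : MonotoneOn D (Icc 0 w) :=
      mono_of (hDc.mono (Icc_subset_Icc le_rfl hw.2))
        (fun y hy => hDd y ⟨hy.1, lt_of_lt_of_le hy.2 hw.2⟩)
        (fun y hy => hA y ⟨hy.1.le, hy.2.le⟩)
    have hDanti : AntitoneOn D (Icc w 1) :=
      anti_of (hDc.mono (Icc_subset_Icc hw.1 le_rfl))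
        (fun y hy => hDd y ⟨lt_of_le_of_lt hw.1 hy.1, hy.2⟩)
        (fun y hy => hB y ⟨hy.1.le, hy.2.le⟩)
    have hDnn : 0 ≤ D x := by
      rcases le_total x w with hxw | hwx
      · have := hDmono (left_mem_Icc.2 hw.1) ⟨hx.1, hxw⟩ hx.1
        rwa [hD0] at this
      · have := hDanti ⟨hwx, hx.2⟩ (right_mem_Icc.2 hw.2) hx.2
        rwa [hD1] at this
    have hint₁ : IntervalIntegrable (bF a₁ b₁) volume 0 x :=
      ((bF_cont ha₁ hb₁).mono (by rw [uIcc_of_le hx.1]; exact Icc_subset_Icc le_rfl hx.2)).intervalIntegrable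
    have hint₂ : IntervalIntegrable (bF a₂ b₂) volume 0 x :=
      ((bF_cont ha₂ hb₂).mono (by rw [uIcc_of_le hx.1]; exact Icc_subset_Icc le_rfl hx.2)).intervalIntegrable
    have hDx : D x = (∫ t in (0:ℝ)..x, bF a₂ b₂ t) - ∫ t in (0:ℝ)..x, bF a₁ b₁ t := by
      rw [hDdef]; simp only [hhdef]
      exact intervalIntegral.integral_sub hint₂ hint₁
    rw [hF₁, hF₂]
    rw [hDx] at hDnn
    linarith
  · -- reverse direction
    intro hssd
    have key : ∀ (a b V : ℝ), 0 < a → 0 < b →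
        a = M * (M - M ^ 2 - V) / V → b = (1 - M) * (M - M ^ 2 - V) / V →
        V ∈ Ioo (0:ℝ) (M - M^2) →
        ∫ x in (0:ℝ)..1, (∫ t in (0:ℝ)..x, bF a b t) = ((1-M)^2 + V)/2 := by
      intro a b V ha hb hadef hbdef hV
      simp only [bF, intervalIntegral.integral_div]
      rw [second_int ha hb, mul_div_assoc, div_self (ne_of_gt (bI_pos ha hb)), mul_one,
        hadef, hbdef]
      exact second_val ⟨hM0, hM1⟩ hV
    have k₁ := key a₁ b₁ V₁ ha₁ hb₁ ha₁def hb₁def hV₁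
    have k₂ := key a₂ b₂ V₂ ha₂ hb₂ ha₂def hb₂def hV₂
    have hint₁ : IntervalIntegrable (fun x => ∫ t in (0:ℝ)..x, bF a₁ b₁ t) volume 0 1 :=
      (prim_cont ((bF_cont ha₁ hb₁).intervalIntegrable_of_Icc zero_le_one)).intervalIntegrable_of_Icc
        zero_le_one
    have hint₂ : IntervalIntegrable (fun x => ∫ t in (0:ℝ)..x, bF a₂ b₂ t) volume 0 1 :=
      (prim_cont ((bF_cont ha₂ hb₂).intervalIntegrable_of_Icc zero_le_one)).intervalIntegrable_of_Icc
        zero_le_one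
    have hmono := intervalIntegral.integral_mono_on zero_le_one hint₁ hint₂ ?_
    · rw [k₁, k₂] at hmono
      linarith
    · intro x hx
      have := hssd x hx
      rwa [hF₁, hF₂] at this
end
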